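/- arXiv:2006.01766 — 7 statements merged into one kernel-verified Lean document; each statement's English description precedes it below -/
import Mathlib

section
/- Let μ be a Borel probability measure on ℝ that is absolutely continuous on the interval I = (x₀−η, x₀+η) for some x₀ ∈ ℝ and η > 0, with density ρ on I satisfying ρ ∈ C^{0,α}(I) for some 0 ≤ α < 1. Let μ^ε denote the Poisson-smoothed measure. Then |ρ(x₀) − μ^ε(x₀)| = O(ε^α) as ε ↓ 0; that is, there exist constants C > 0 and ε₀ > 0 such that |ρ(x₀) − μ^ε(x₀)| ≤ C ε^α for all 0 < ε < ε₀. -/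
open MeasureTheory Real Set

/-- The Poisson-smoothed measure `μ^ε(x) = (1/π) ∫ ε/(ε²+(x−y)²) dμ(y)`. -/
noncomputable def poissonSmooth (μ : Measure ℝ) (ε x : ℝ) : ℝ :=
  (1 / π) * ∫ y, ε / (ε ^ 2 + (x - y) ^ 2) ∂μ

/-- `μ` is absolutely continuous on `I` with (nonnegative) density `ρ ∈ L¹(I)`. -/
def ACOnWithDensity (μ : Measure ℝ) (I : Set ℝ) (ρ : ℝ → ℝ) : Prop :=
  (∀ y ∈ I, 0 ≤ ρ y) ∧ IntegrableOn ρ I volume ∧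
    μ.restrict I = (volume.restrict I).withDensity (fun y => ENNReal.ofReal (ρ y))

/-- `h` is `α`-Hölder continuous on `I`. -/
def HolderOn (α : ℝ) (I : Set ℝ) (h : ℝ → ℝ) : Prop :=
  ∃ C : ℝ, 0 ≤ C ∧ ∀ x ∈ I, ∀ y ∈ I, |h x - h y| ≤ C * |x - y| ^ α

/- ## Auxiliary lemmas -/

lemma aux_contH (α : ℝ) (hα0 : 0 ≤ α) :
    Continuous fun s : ℝ => |s| ^ α / (1 + s ^ 2) := by
  refine Continuous.div (continuous_abs.rpow_const fun x => Or.inr hα0)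
    (continuous_const.add (continuous_pow 2)) fun x => by positivity

lemma aux_H_integrable (α : ℝ) (hα0 : 0 ≤ α) (hα1 : α < 1) :
    Integrable (fun s : ℝ => |s| ^ α / (1 + s ^ 2)) := by
  have hmeas := (aux_contH α hα0).aestronglyMeasurable (μ := volume)
  set g : ℝ → ℝ := fun s => |s| ^ (α - 2) with hg
  have h1 : IntegrableOn g (Ici (1 : ℝ)) := by
    rw [integrableOn_Ici_iff_integrableOn_Ioi]
    exact (integrableOn_Ioi_rpow_of_lt (a := α - 2) (by linarith) one_pos).congr_fun
      (fun x hx => by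
        simp only [hg]
        rw [abs_of_pos (lt_trans one_pos (mem_Ioi.mp hx))]) measurableSet_Ioi
  have h2 : IntegrableOn g (Iic (-1 : ℝ)) := by
    have h3 := ((integrable_indicator_iff measurableSet_Ici).2 h1).comp_neg
    have h4 : (fun x : ℝ => (Ici (1:ℝ)).indicator g (-x)) = (Iic (-1:ℝ)).indicator g := by
      funext x
      simp only [indicator_apply, mem_Ici, mem_Iic, le_neg, hg, abs_neg]
    rw [h4] at h3
    exact (integrable_indicator_iff measurableSet_Iic).1 h3
  have hBint : Integrable (fun s : ℝ => (1 + s ^ 2)⁻¹ +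
      (Iic (-1:ℝ) ∪ Ici 1).indicator g s) := by
    refine integrable_inv_one_add_sq.add ?_
    rw [integrable_indicator_iff (measurableSet_Iic.union measurableSet_Ici)]
    exact h2.union h1
  refine hBint.mono' hmeas (Filter.Eventually.of_forall fun s => ?_)
  have hden : (0:ℝ) < 1 + s ^ 2 := by positivity
  have hnn : (0:ℝ) ≤ |s| ^ α / (1 + s ^ 2) := by positivity
  rw [Real.norm_eq_abs, abs_of_nonneg hnn]
  by_cases hs : |s| ≤ 1
  · have : |s| ^ α ≤ 1 := Real.rpow_le_one (abs_nonneg s) hs hα0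
    have h5 : |s| ^ α / (1 + s ^ 2) ≤ (1 + s ^ 2)⁻¹ := by
      rw [div_le_iff₀ hden, inv_mul_cancel₀ hden.ne']
      exact this
    refine h5.trans (le_add_of_nonneg_right (indicator_nonneg (fun y _ => by positivity) s))
  · push_neg at hs
    have hmem : s ∈ Iic (-1:ℝ) ∪ Ici 1 := by
      rcases abs_cases s with ⟨h, _⟩ | ⟨h, _⟩
      · right; rw [mem_Ici]; linarith [hs, h]
      · left; rw [mem_Iic]; linarith [hs, h]
    rw [indicator_of_mem hmem]
    have hs0 : (0:ℝ) < |s| := lt_trans one_pos hs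
    have key : |s| ^ α / (1 + s ^ 2) ≤ g s := by
      show |s| ^ α / (1 + s ^ 2) ≤ |s| ^ (α - 2)
      have h6 : |s| ^ (α - 2) = |s| ^ α / |s| ^ (2:ℝ) := by
        rw [← Real.rpow_sub hs0]
      have h7 : |s| ^ (2:ℝ) = s ^ 2 := by
        rw [show (2:ℝ) = ((2:ℕ):ℝ) by norm_num, Real.rpow_natCast, sq_abs]
      rw [h6]
      have h8 : |s| ^ α / (1 + s ^ 2) ≤ |s| ^ α / |s| ^ (2:ℝ) := by
        apply div_le_div_of_nonneg_left (by positivity) (Real.rpow_pos_of_pos hs0 2)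
        rw [h7]; linarith
      exact h8
    exact key.trans (le_add_of_nonneg_left (by positivity))

lemma aux_G_eq (α ε : ℝ) (hε : 0 < ε) (x : ℝ) :
    ε * |x| ^ α / (ε ^ 2 + x ^ 2)
      = ε ^ (α - 1) * (|x / ε| ^ α / (1 + (x / ε) ^ 2)) := by
  have hd : (0:ℝ) < ε ^ 2 + x ^ 2 := by positivity
  have h1 : |x / ε| = |x| / ε := by rw [abs_div, abs_of_pos hε]
  have h2 : (|x| / ε) ^ α = |x| ^ α / ε ^ α :=
    Real.div_rpow (abs_nonneg x) hε.le α
  have h3 : 1 + (x / ε) ^ 2 = (ε ^ 2 + x ^ 2) / ε ^ 2 := by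
    field_simp
  have hεα : (0:ℝ) < ε ^ α := Real.rpow_pos_of_pos hε α
  rw [h1, h2, h3, div_div_div_eq, ← mul_div_assoc,
    div_eq_div_iff hd.ne' (by positivity : (0:ℝ) < ε ^ α * (ε ^ 2 + x ^ 2)).ne']
  have key : ε ^ (α - 1) * ε ^ 2 = ε * ε ^ α := by
    have : ε ^ (α - 1) * ε ^ (2:ℝ) = ε ^ (α + 1) := by
      rw [← Real.rpow_add hε]; ring_nf
    rw [show ε ^ 2 = ε ^ (2:ℝ) by rw [show (2:ℝ) = ((2:ℕ):ℝ) by norm_num, Real.rpow_natCast],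
      this, Real.rpow_add hε, Real.rpow_one]; ring
  calc ε * |x| ^ α * (ε ^ α * (ε ^ 2 + x ^ 2))
      = (ε * ε ^ α) * (|x| ^ α * (ε ^ 2 + x ^ 2)) := by ring
    _ = (ε ^ (α - 1) * ε ^ 2) * (|x| ^ α * (ε ^ 2 + x ^ 2)) := by rw [key]
    _ = ε ^ (α - 1) * (|x| ^ α * ε ^ 2) * (ε ^ 2 + x ^ 2) := by ring

lemma aux_G_integrable (α ε : ℝ) (hα0 : 0 ≤ α) (hα1 : α < 1) (hε : 0 < ε) :
    Integrable (fun x : ℝ => ε * |x| ^ α / (ε ^ 2 + x ^ 2)) := by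
  have h := (((aux_H_integrable α hα0 hα1).comp_div hε.ne').const_mul (ε ^ (α - 1)))
  exact h.congr (Filter.Eventually.of_forall fun x => (aux_G_eq α ε hε x).symm)

lemma aux_G_integral (α ε : ℝ) (hα0 : 0 ≤ α) (hα1 : α < 1) (hε : 0 < ε) :
    ∫ x : ℝ, ε * |x| ^ α / (ε ^ 2 + x ^ 2)
      = ε ^ α * ∫ s : ℝ, |s| ^ α / (1 + s ^ 2) := by
  have h1 : ∫ x : ℝ, ε * |x| ^ α / (ε ^ 2 + x ^ 2)
      = ∫ x : ℝ, ε ^ (α - 1) * ((fun s : ℝ => |s| ^ α / (1 + s ^ 2)) (x / ε)) := by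
    congr 1; funext x; exact aux_G_eq α ε hε x
  rw [h1, integral_const_mul, MeasureTheory.Measure.integral_comp_div
      (fun s : ℝ => |s| ^ α / (1 + s ^ 2)) ε, abs_of_pos hε, smul_eq_mul]
  rw [← mul_assoc]
  congr 1
  rw [show ε ^ (α - 1) * ε = ε ^ (α - 1) * ε ^ (1:ℝ) by rw [Real.rpow_one],
    ← Real.rpow_add hε]
  norm_num

lemma aux_K_eq (ε : ℝ) (hε : 0 < ε) (x : ℝ) :
    ε / (ε ^ 2 + x ^ 2) = ε⁻¹ * (1 + (x / ε) ^ 2)⁻¹ := by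
  have hd : (0:ℝ) < ε ^ 2 + x ^ 2 := by positivity
  have h3 : 1 + (x / ε) ^ 2 = (ε ^ 2 + x ^ 2) / ε ^ 2 := by field_simp
  rw [h3]
  field_simp

lemma aux_K_integrable (ε : ℝ) (hε : 0 < ε) :
    Integrable (fun x : ℝ => ε / (ε ^ 2 + x ^ 2)) := by
  have h := ((integrable_inv_one_add_sq.comp_div hε.ne').const_mul ε⁻¹)
  exact h.congr (Filter.Eventually.of_forall fun x => (aux_K_eq ε hε x).symm)

lemma aux_K_integral (ε : ℝ) (hε : 0 < ε) :
    ∫ x : ℝ, ε / (ε ^ 2 + x ^ 2) = π := by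
  have h1 : ∫ x : ℝ, ε / (ε ^ 2 + x ^ 2)
      = ∫ x : ℝ, ε⁻¹ * ((fun s : ℝ => (1 + s ^ 2)⁻¹) (x / ε)) := by
    congr 1; funext x; exact aux_K_eq ε hε x
  rw [h1, integral_const_mul, MeasureTheory.Measure.integral_comp_div
      (fun s : ℝ => (1 + s ^ 2)⁻¹) ε, abs_of_pos hε, smul_eq_mul,
      integral_univ_inv_one_add_sq, ← mul_assoc, inv_mul_cancel₀ hε.ne', one_mul]

set_option maxHeartbeats 2000000 in
/-- If `μ` is a Borel probability measure on `ℝ`, absolutely continuous on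
`I = (x₀−η, x₀+η)` with density `ρ ∈ C^{0,α}(I)` for some `0 ≤ α < 1`, then the
Poisson-smoothed measure satisfies `|ρ(x₀) − μ^ε(x₀)| = O(ε^α)` as `ε ↓ 0`. -/
theorem stmt_0 (μ : Measure ℝ) [IsProbabilityMeasure μ] (x₀ η α : ℝ) (hη : 0 < η)
    (hα0 : 0 ≤ α) (hα1 : α < 1) (ρ : ℝ → ℝ)
    (hac : ACOnWithDensity μ (Ioo (x₀ - η) (x₀ + η)) ρ)
    (hhold : HolderOn α (Ioo (x₀ - η) (x₀ + η)) ρ) :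
    ∃ C > (0 : ℝ), ∃ ε₀ > (0 : ℝ), ∀ ε : ℝ, 0 < ε → ε < ε₀ →
      |ρ x₀ - poissonSmooth μ ε x₀| ≤ C * ε ^ α := by
  obtain ⟨hρ0, hρint, hμI⟩ := hac
  obtain ⟨CH, hCH0, hCH⟩ := hhold
  set I : Set ℝ := Ioo (x₀ - η) (x₀ + η) with hIdef
  have mI : MeasurableSet I := measurableSet_Ioo
  have hx₀I : x₀ ∈ I := by rw [hIdef, mem_Ioo]; constructor <;> linarith
  have hρx₀ : 0 ≤ ρ x₀ := hρ0 x₀ hx₀I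
  set J : ℝ := ∫ s : ℝ, |s| ^ α / (1 + s ^ 2) with hJdef
  have hJ0 : 0 ≤ J := integral_nonneg fun s => by positivity
  have hπ : (0:ℝ) < π := pi_pos
  set C : ℝ := (1 / π) * (CH * J + ρ x₀ * η ^ (-α) * J + 1 / η ^ 2) + 1 with hCdef
  have hηα : (0:ℝ) < η ^ (-α) := Real.rpow_pos_of_pos hη _
  have hC0 : 0 < C := by
    rw [hCdef]
    have h1 : 0 ≤ CH * J + ρ x₀ * η ^ (-α) * J + 1 / η ^ 2 := by
      have := mul_nonneg hCH0 hJ0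
      have := mul_nonneg (mul_nonneg hρx₀ hηα.le) hJ0
      positivity
    have h2 : 0 ≤ (1 / π) * (CH * J + ρ x₀ * η ^ (-α) * J + 1 / η ^ 2) :=
      mul_nonneg (by positivity) h1
    linarith
  refine ⟨C, hC0, 1, one_pos, fun ε hε hε1 => ?_⟩
  have hεα : (0:ℝ) < ε ^ α := Real.rpow_pos_of_pos hε α
  have hεle : ε ≤ ε ^ α := by
    calc ε = ε ^ (1:ℝ) := (Real.rpow_one ε).symm
    _ ≤ ε ^ α := Real.rpow_le_rpow_of_exponent_ge hε hε1.le hα1.le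
  rw [poissonSmooth]
  set f : ℝ → ℝ := fun y => ε / (ε ^ 2 + (x₀ - y) ^ 2) with hfdef
  have hfc : Continuous f := continuous_const.div
    (by fun_prop) (fun y => by positivity)
  have hf0 : ∀ y, 0 ≤ f y := fun y => by rw [hfdef]; positivity
  have hfub : ∀ y, f y ≤ ε⁻¹ := by
    intro y
    have h1 : f y ≤ ε / ε ^ 2 := by
      rw [hfdef]
      exact div_le_div_of_nonneg_left hε.le (by positivity) (by nlinarith [sq_nonneg (x₀ - y)])
    have h2 : ε / ε ^ 2 = ε⁻¹ := by rw [pow_two, ← div_div, div_self hε.ne', one_div]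
    linarith
  -- global integrability
  have hfvol : Integrable f volume :=
    (aux_K_integrable ε hε).comp_sub_left x₀
  have hfint : ∫ y, f y = π :=
    (integral_sub_left_eq_self (fun t : ℝ => ε / (ε ^ 2 + t ^ 2)) volume x₀).trans
      (aux_K_integral ε hε)
  have hfμ : Integrable f μ := by
    refine (integrable_const (ε⁻¹)).mono' hfc.aestronglyMeasurable
      (Filter.Eventually.of_forall fun y => ?_)
    rw [Real.norm_eq_abs, abs_of_nonneg (hf0 y)]
    exact hfub y
  -- the Hölder dominator
  have hGvol : Integrable (fun y => ε * |x₀ - y| ^ α / (ε ^ 2 + (x₀ - y) ^ 2)) volume :=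
    (aux_G_integrable α ε hα0 hα1 hε).comp_sub_left x₀
  have hGint : ∫ y, ε * |x₀ - y| ^ α / (ε ^ 2 + (x₀ - y) ^ 2) = ε ^ α * J :=
    (integral_sub_left_eq_self (fun t : ℝ => ε * |t| ^ α / (ε ^ 2 + t ^ 2)) volume x₀).trans
      (aux_G_integral α ε hα0 hα1 hε)
  have hG0 : ∀ y, 0 ≤ ε * |x₀ - y| ^ α / (ε ^ 2 + (x₀ - y) ^ 2) := fun y => by positivity
  -- densities
  have hI_dens : ∫ y in I, f y ∂μ = ∫ y in I, f y * ρ y := by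
    show ∫ y, f y ∂(μ.restrict I) = _
    rw [hμI]
    have hmeasρ : AEMeasurable (fun y => (ρ y).toNNReal) (volume.restrict I) :=
      measurable_real_toNNReal.comp_aemeasurable hρint.aemeasurable
    rw [show (fun y => ENNReal.ofReal (ρ y)) = fun y => ((ρ y).toNNReal : ENNReal) from rfl,
      integral_withDensity_eq_integral_smul₀ hmeasρ f]
    refine integral_congr_ae ?_
    filter_upwards [ae_restrict_mem mI] with y hy
    rw [NNReal.smul_def, smul_eq_mul, Real.coe_toNNReal _ (hρ0 y hy), mul_comm]
  -- integrabilities on I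
  have hfI : IntegrableOn f I volume := hfvol.integrableOn
  have hfρI : IntegrableOn (fun y => f y * ρ y) I volume := by
    refine hρint.bdd_mul (c := ε⁻¹) hfc.aestronglyMeasurable.restrict (Filter.Eventually.of_forall fun y => ?_)
    rw [Real.norm_eq_abs, abs_of_nonneg (hf0 y)]; exact hfub y
  have hfcI : IntegrableOn (fun y => f y * ρ x₀) I volume := hfI.mul_const _
  have hT1int : IntegrableOn (fun y => f y * (ρ x₀ - ρ y)) I volume :=
    (hfcI.sub hfρI).congr (Filter.Eventually.of_forall fun y => by
      simp only [Pi.sub_apply]; ring)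
  have hsub : ∫ y in I, f y * (ρ x₀ - ρ y)
      = (∫ y in I, f y) * ρ x₀ - ∫ y in I, f y * ρ y := by
    have h1 : ∫ y in I, f y * (ρ x₀ - ρ y)
        = ∫ y in I, (f y * ρ x₀ - f y * ρ y) := integral_congr_ae
      (Filter.Eventually.of_forall fun y => by ring)
    rw [h1, integral_sub hfcI hfρI, integral_mul_const]
  -- Bound 1 : the Hölder term
  have B1 : |∫ y in I, f y * (ρ x₀ - ρ y)| ≤ CH * (ε ^ α * J) := by
    have step1 : |∫ y in I, f y * (ρ x₀ - ρ y)| ≤ ∫ y in I, |f y * (ρ x₀ - ρ y)| := by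
      simpa only [Real.norm_eq_abs] using
        norm_integral_le_integral_norm (μ := volume.restrict I)
          (fun y => f y * (ρ x₀ - ρ y))
    have step2 : ∫ y in I, |f y * (ρ x₀ - ρ y)|
        ≤ ∫ y in I, CH * (ε * |x₀ - y| ^ α / (ε ^ 2 + (x₀ - y) ^ 2)) := by
      refine setIntegral_mono_on hT1int.abs
        ((hGvol.const_mul CH).integrableOn) mI fun y hy => ?_
      have e1 : |f y * (ρ x₀ - ρ y)| = f y * |ρ x₀ - ρ y| := by
        rw [abs_mul, abs_of_nonneg (hf0 y)]
      have e2 : f y * |ρ x₀ - ρ y| ≤ f y * (CH * |x₀ - y| ^ α) :=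
        mul_le_mul_of_nonneg_left (hCH x₀ hx₀I y hy) (hf0 y)
      have e3 : f y * (CH * |x₀ - y| ^ α)
          = CH * (ε * |x₀ - y| ^ α / (ε ^ 2 + (x₀ - y) ^ 2)) := by
        rw [hfdef]; ring
      rw [e1, ← e3]; exact e2
    have step3 : ∫ y in I, CH * (ε * |x₀ - y| ^ α / (ε ^ 2 + (x₀ - y) ^ 2))
        ≤ ∫ y, CH * (ε * |x₀ - y| ^ α / (ε ^ 2 + (x₀ - y) ^ 2)) :=
      setIntegral_le_integral (hGvol.const_mul CH)
        (Filter.Eventually.of_forall fun y => mul_nonneg hCH0 (hG0 y))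
    have step4 : ∫ y, CH * (ε * |x₀ - y| ^ α / (ε ^ 2 + (x₀ - y) ^ 2)) = CH * (ε ^ α * J) := by
      rw [integral_const_mul, hGint]
    linarith
  -- Bound 2 : volume tail
  have hBnn : 0 ≤ ∫ y in Iᶜ, f y :=
    setIntegral_nonneg mI.compl fun y _ => hf0 y
  have B2 : ∫ y in Iᶜ, f y ≤ η ^ (-α) * (ε ^ α * J) := by
    have step2 : ∫ y in Iᶜ, f y
        ≤ ∫ y in Iᶜ, η ^ (-α) * (ε * |x₀ - y| ^ α / (ε ^ 2 + (x₀ - y) ^ 2)) := by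
      refine setIntegral_mono_on hfvol.integrableOn
        ((hGvol.const_mul (η ^ (-α))).integrableOn) mI.compl fun y hy => ?_
      have hty : η ≤ |x₀ - y| := by
        rw [hIdef] at hy
        simp only [mem_compl_iff, mem_Ioo, not_and_or, not_lt] at hy
        rcases hy with hy | hy
        · exact le_trans (by linarith) (le_abs_self _)
        · exact le_trans (by linarith) (neg_le_abs _)
      have h1 : η ^ α ≤ |x₀ - y| ^ α := Real.rpow_le_rpow hη.le hty hα0
      have h2 : (1:ℝ) ≤ η ^ (-α) * |x₀ - y| ^ α := by
        rw [Real.rpow_neg hη.le]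
        have hηa : (0:ℝ) < η ^ α := Real.rpow_pos_of_pos hη α
        rw [inv_mul_eq_div, le_div_iff₀ hηa]
        linarith
      have h3 : f y = 1 * f y := (one_mul _).symm
      calc f y = 1 * f y := h3
        _ ≤ (η ^ (-α) * |x₀ - y| ^ α) * f y :=
          mul_le_mul_of_nonneg_right h2 (hf0 y)
        _ = η ^ (-α) * (ε * |x₀ - y| ^ α / (ε ^ 2 + (x₀ - y) ^ 2)) := by
          rw [hfdef]; ring
    have step3 : ∫ y in Iᶜ, η ^ (-α) * (ε * |x₀ - y| ^ α / (ε ^ 2 + (x₀ - y) ^ 2))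
        ≤ ∫ y, η ^ (-α) * (ε * |x₀ - y| ^ α / (ε ^ 2 + (x₀ - y) ^ 2)) :=
      setIntegral_le_integral (hGvol.const_mul _)
        (Filter.Eventually.of_forall fun y => mul_nonneg hηα.le (hG0 y))
    have step4 : ∫ y, η ^ (-α) * (ε * |x₀ - y| ^ α / (ε ^ 2 + (x₀ - y) ^ 2))
        = η ^ (-α) * (ε ^ α * J) := by rw [integral_const_mul, hGint]
    linarith
  -- Bound 3 : μ tail
  have B3 : |∫ y in Iᶜ, f y ∂μ| ≤ ε / η ^ 2 := by
    have hb : ∀ y ∈ Iᶜ, ‖f y‖ ≤ ε / η ^ 2 := by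
      intro y hy
      have hty : η ≤ |x₀ - y| := by
        rw [hIdef] at hy
        simp only [mem_compl_iff, mem_Ioo, not_and_or, not_lt] at hy
        rcases hy with hy | hy
        · exact le_trans (by linarith) (le_abs_self _)
        · exact le_trans (by linarith) (neg_le_abs _)
      have h1 : η ^ 2 ≤ (x₀ - y) ^ 2 := by
        have := pow_le_pow_left₀ hη.le hty 2
        rwa [sq_abs] at this
      rw [Real.norm_eq_abs, abs_of_nonneg (hf0 y), hfdef]
      exact div_le_div_of_nonneg_left hε.le (by positivity) (by nlinarith [sq_nonneg ε])
    have hμc : μ Iᶜ < ⊤ := measure_lt_top μ _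
    have := norm_setIntegral_le_of_norm_le_const (μ := μ) (s := Iᶜ) hμc hb
    rw [Real.norm_eq_abs] at this
    have hμ1 : (μ Iᶜ).toReal ≤ 1 := by
      have h := prob_le_one (μ := μ) (s := Iᶜ)
      calc (μ Iᶜ).toReal ≤ (1 : ENNReal).toReal := ENNReal.toReal_mono ENNReal.one_ne_top h
        _ = 1 := by simp
    calc |∫ y in Iᶜ, f y ∂μ| ≤ ε / η ^ 2 * (μ Iᶜ).toReal := this
      _ ≤ ε / η ^ 2 * 1 := by
          exact mul_le_mul_of_nonneg_left hμ1 (by positivity)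
      _ = ε / η ^ 2 := mul_one _
  -- assembling
  have keyμ : ∫ y, f y ∂μ
      = (∫ y in I, f y) * ρ x₀ - (∫ y in I, f y * (ρ x₀ - ρ y)) + ∫ y in Iᶜ, f y ∂μ := by
    rw [← integral_add_compl mI hfμ, hI_dens]
    linarith [hsub]
  have h₂ : (∫ y in I, f y) + ∫ y in Iᶜ, f y = π :=
    (integral_add_compl mI hfvol).trans hfint
  have key : ρ x₀ - (1/π) * ∫ y, f y ∂μ
      = (1/π) * ((∫ y in I, f y * (ρ x₀ - ρ y)) + (∫ y in Iᶜ, f y) * ρ x₀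
          - ∫ y in Iᶜ, f y ∂μ) := by
    rw [keyμ]
    field_simp
    linear_combination (-ρ x₀) * h₂
  rw [key]
  have habs : |(1/π) * ((∫ y in I, f y * (ρ x₀ - ρ y)) + (∫ y in Iᶜ, f y) * ρ x₀
      - ∫ y in Iᶜ, f y ∂μ)|
      ≤ (1/π) * (|∫ y in I, f y * (ρ x₀ - ρ y)| + |(∫ y in Iᶜ, f y) * ρ x₀|
          + |∫ y in Iᶜ, f y ∂μ|) := by
    rw [abs_mul, abs_of_pos (by positivity : (0:ℝ) < 1/π)]
    refine mul_le_mul_of_nonneg_left ?_ (by positivity)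
    calc |(∫ y in I, f y * (ρ x₀ - ρ y)) + (∫ y in Iᶜ, f y) * ρ x₀ - ∫ y in Iᶜ, f y ∂μ|
        = |((∫ y in I, f y * (ρ x₀ - ρ y)) + (∫ y in Iᶜ, f y) * ρ x₀) + -(∫ y in Iᶜ, f y ∂μ)| :=
          by rw [sub_eq_add_neg]
      _ ≤ |(∫ y in I, f y * (ρ x₀ - ρ y)) + (∫ y in Iᶜ, f y) * ρ x₀| + |-(∫ y in Iᶜ, f y ∂μ)| :=
          abs_add_le _ _
      _ ≤ |∫ y in I, f y * (ρ x₀ - ρ y)| + |(∫ y in Iᶜ, f y) * ρ x₀| + |∫ y in Iᶜ, f y ∂μ| := by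
          rw [abs_neg]
          have := abs_add_le (∫ y in I, f y * (ρ x₀ - ρ y)) ((∫ y in Iᶜ, f y) * ρ x₀)
          linarith
  have hB2' : |(∫ y in Iᶜ, f y) * ρ x₀| ≤ (η ^ (-α) * (ε ^ α * J)) * ρ x₀ := by
    rw [abs_mul, abs_of_nonneg hBnn, abs_of_nonneg hρx₀]
    exact mul_le_mul_of_nonneg_right B2 hρx₀
  have hB3' : |∫ y in Iᶜ, f y ∂μ| ≤ ε ^ α / η ^ 2 := by
    refine B3.trans ?_
    gcongr
  calc |(1/π) * ((∫ y in I, f y * (ρ x₀ - ρ y)) + (∫ y in Iᶜ, f y) * ρ x₀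
      - ∫ y in Iᶜ, f y ∂μ)|
      ≤ (1/π) * (|∫ y in I, f y * (ρ x₀ - ρ y)| + |(∫ y in Iᶜ, f y) * ρ x₀|
          + |∫ y in Iᶜ, f y ∂μ|) := habs
    _ ≤ (1/π) * (CH * (ε ^ α * J) + (η ^ (-α) * (ε ^ α * J)) * ρ x₀ + ε ^ α / η ^ 2) := by
        refine mul_le_mul_of_nonneg_left ?_ (by positivity)
        linarith [B1, hB2', hB3']
    _ = ((1 / π) * (CH * J + ρ x₀ * η ^ (-α) * J + 1 / η ^ 2)) * ε ^ α := by ring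
    _ ≤ C * ε ^ α := by
        rw [hCdef]
        nlinarith [hεα.le]
end

section
/- Let m ≥ 1 and let K be an mth order kernel with constant C_K, and let K̂(ω) = ∫_ℝ K(x) e^{−2πixω} dx denote its Fourier transform. Then for any α ∈ (0,1): (a) K̂ is (m−1)-times continuously differentiable on ℝ and its (m−1)st derivative is α-Hölder continuous, i.e. K̂ ∈ C^{m−1,α}(ℝ); and (b) for every ω ∈ ℝ, |K̂(ω) − 1| ≤ (|K̂^{(m−1)}|_{C^{0,α}(ℝ)}/(m−1)!) · |ω|^{m−1+α}. -/
open MeasureTheory Real Set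

/-- `K` is an `m`th order kernel with decay constant `C_K`. -/
structure IsKernelOfOrder (m : ℕ) (CK : ℝ) (K : ℝ → ℝ) : Prop where
  integrable : Integrable K
  integral_one : (∫ x, K x) = 1
  moment_integrable : ∀ j : ℕ, 0 < j → j < m → Integrable (fun x => K x * x ^ j)
  moment_zero : ∀ j : ℕ, 0 < j → j < m → (∫ x, K x * x ^ j) = 0
  CK_pos : 0 < CK
  decay : ∀ x : ℝ, |K x| ≤ CK / (1 + |x|) ^ (m + 1)

/-- The Fourier transform `K̂(ω) = ∫ K(x) e^{−2πixω} dx`. -/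
noncomputable def fourierK (K : ℝ → ℝ) (ω : ℝ) : ℂ :=
  ∫ x : ℝ, (K x : ℂ) * Complex.exp (-(2 * Real.pi * Complex.I * x * ω))

/-- The global Hölder seminorm `|h|_{C^{0,α}(ℝ)}` of a complex-valued function,
realized as the least admissible Hölder constant. -/
noncomputable def holderSemiC (α : ℝ) (h : ℝ → ℂ) : ℝ :=
  sInf {C : ℝ | 0 ≤ C ∧ ∀ x y : ℝ, ‖h x - h y‖ ≤ C * |x - y| ^ α}

lemma fourierK_eq (K : ℝ → ℝ) : fourierK K = FourierTransform.fourier (fun x : ℝ => (K x : ℂ)) := by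
  funext ω
  rw [Real.fourier_real_eq_integral_exp_smul]
  unfold fourierK
  congr 1
  funext x
  rw [smul_eq_mul, mul_comm]
  congr 1
  push_cast
  ring


lemma exp_sub_exp_bound {α : ℝ} (hα0 : 0 < α) (hα1 : α < 1) (a b : ℝ) :
    ‖Complex.exp (↑a * Complex.I) - Complex.exp (↑b * Complex.I)‖
      ≤ 2 ^ (1 - α) * (2 * |a - b|) ^ α := by
  have hs : (0:ℝ) ≤ 2 * |a - b| := by positivity
  have h2 : ∀ c d : ℝ, ‖Complex.exp (↑c * Complex.I) - Complex.exp (↑d * Complex.I)‖ ≤ 2 := by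
    intro c d
    refine (norm_sub_le _ _).trans ?_
    rw [Complex.norm_exp_ofReal_mul_I,
      Complex.norm_exp_ofReal_mul_I]
    norm_num
  have hl : ‖Complex.exp (↑a * Complex.I) - Complex.exp (↑b * Complex.I)‖ ≤ 2 * |a - b| := by
    have hfact : Complex.exp (↑a * Complex.I) - Complex.exp (↑b * Complex.I)
        = Complex.exp (↑b * Complex.I) * (Complex.exp (↑(a-b) * Complex.I) - 1) := by
      rw [mul_sub, ← Complex.exp_add, mul_one]
      push_cast
      ring_nf
    rw [hfact, norm_mul, Complex.norm_exp_ofReal_mul_I, one_mul]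
    have habs : ‖(↑(a-b) * Complex.I : ℂ)‖ = |a - b| := by
      rw [norm_mul, Complex.norm_real, Complex.norm_I, mul_one, Real.norm_eq_abs]
    rcases le_total (|a - b|) 1 with hab | hab
    · have := Complex.norm_exp_sub_one_le (x := ↑(a-b) * Complex.I) (by rw [habs]; exact hab)
      rw [habs] at this
      exact this
    · have : ‖Complex.exp (↑(a-b) * Complex.I) - 1‖ ≤ 2 := by
        have := h2 (a-b) 0
        simpa using this
      exact this.trans (by linarith)
  have h1 : (1 - α) + α = 1 := by ring
  rcases le_total (2*|a-b|) 2 with h | h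
  · calc ‖Complex.exp (↑a * Complex.I) - Complex.exp (↑b * Complex.I)‖ ≤ 2*|a-b| := hl
      _ = (2*|a-b|)^(1-α) * (2*|a-b|)^α := by
          rw [← Real.rpow_add' hs (by rw [h1]; exact one_ne_zero), h1, Real.rpow_one]
      _ ≤ 2^(1-α) * (2*|a-b|)^α := by
          apply mul_le_mul_of_nonneg_right (Real.rpow_le_rpow hs h (by linarith))
          positivity
  · calc ‖Complex.exp (↑a * Complex.I) - Complex.exp (↑b * Complex.I)‖ ≤ 2 := h2 a b
      _ = 2^(1-α) * 2^α := by
          rw [← Real.rpow_add' (by norm_num) (by rw [h1]; exact one_ne_zero), h1, Real.rpow_one]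
      _ ≤ 2^(1-α) * (2*|a-b|)^α := by
          apply mul_le_mul_of_nonneg_left (Real.rpow_le_rpow (by norm_num) h hα0.le)
          positivity

lemma kernel_integrable {m : ℕ} {CK : ℝ} {K : ℝ → ℝ} (hK : IsKernelOfOrder m CK K)
    {p : ℝ} (hp : 0 ≤ p) (hpm : p < m) :
    Integrable (fun x : ℝ => |x| ^ p * |K x|) := by
  have h1 : ∀ x : ℝ, (0:ℝ) < 1 + |x| := fun x => by positivity
  have hmeas : AEStronglyMeasurable (fun x : ℝ => |x| ^ p * |K x|) volume :=
    ((continuous_abs.rpow_const fun x => Or.inr hp).aestronglyMeasurable).mul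
      hK.integrable.abs.aestronglyMeasurable
  have hint : Integrable (fun x : ℝ => CK * (1 + ‖x‖) ^ (-((m:ℝ) + 1 - p))) :=
    (integrable_one_add_norm (by
      simp only [Module.finrank_self, Nat.cast_one]; linarith)).const_mul CK
  refine hint.mono' hmeas (ae_of_all _ fun x => ?_)
  rw [Real.norm_eq_abs, abs_of_nonneg (by positivity), Real.norm_eq_abs]
  calc |x| ^ p * |K x| ≤ (1 + |x|) ^ p * (CK / (1 + |x|) ^ (m + 1)) := by
        apply mul_le_mul (Real.rpow_le_rpow (abs_nonneg x) (by linarith [abs_nonneg x]) hp)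
          (hK.decay x) (abs_nonneg _) (by positivity)
    _ = CK * (1 + |x|) ^ (-((m:ℝ) + 1 - p)) := by
        rw [← Real.rpow_natCast (1 + |x|) (m + 1), div_eq_mul_inv,
          ← Real.rpow_neg (h1 x).le]
        rw [show (1 + |x|) ^ p * (CK * (1 + |x|) ^ (-((m + 1 : ℕ) : ℝ)))
            = CK * ((1 + |x|) ^ p * (1 + |x|) ^ (-((m + 1 : ℕ) : ℝ))) from by ring,
          ← Real.rpow_add (h1 x)]
        congr 1
        push_cast
        ring


lemma norm_le_of_deriv_rpow_aux {f f' : ℝ → ℂ} (hd : ∀ t, HasDerivAt f (f' t) t)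
    (hc : Continuous f') (h0 : f 0 = 0) {B p : ℝ} (hB : 0 ≤ B) (hp : 0 ≤ p)
    (hb : ∀ t, ‖f' t‖ ≤ B * |t| ^ p) {ω : ℝ} (hω : 0 ≤ ω) :
    ‖f ω‖ ≤ B / (p + 1) * |ω| ^ (p + 1) := by
  have hFTC : ∫ t in (0:ℝ)..ω, f' t = f ω - f 0 :=
    intervalIntegral.integral_eq_sub_of_hasDerivAt (fun t _ => hd t)
      (hc.intervalIntegrable _ _)
  rw [h0, sub_zero] at hFTC
  rw [← hFTC]
  have hcont : Continuous fun t : ℝ => B * |t| ^ p :=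
    continuous_const.mul (continuous_abs.rpow_const fun x => Or.inr hp)
  calc ‖∫ t in (0:ℝ)..ω, f' t‖ ≤ ∫ t in (0:ℝ)..ω, ‖f' t‖ :=
        intervalIntegral.norm_integral_le_integral_norm hω
    _ ≤ ∫ t in (0:ℝ)..ω, B * |t| ^ p :=
        intervalIntegral.integral_mono_on hω (hc.norm.intervalIntegrable _ _)
          (hcont.intervalIntegrable _ _) (fun t _ => hb t)
    _ = ∫ t in (0:ℝ)..ω, B * t ^ p := by
        apply intervalIntegral.integral_congr
        intro t ht
        rw [uIcc_of_le hω] at ht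
        show B * |t| ^ p = B * t ^ p
        rw [abs_of_nonneg ht.1]
    _ = B * ((ω ^ (p+1) - (0:ℝ) ^ (p+1)) / (p+1)) := by
        rw [intervalIntegral.integral_const_mul, integral_rpow (Or.inl (by linarith))]
    _ = B / (p+1) * |ω| ^ (p+1) := by
        rw [Real.zero_rpow (by positivity : (0:ℝ) < p + 1).ne', abs_of_nonneg hω]
        ring

lemma norm_le_of_deriv_rpow {f f' : ℝ → ℂ} (hd : ∀ t, HasDerivAt f (f' t) t)
    (hc : Continuous f') (h0 : f 0 = 0) {B p : ℝ} (hB : 0 ≤ B) (hp : 0 ≤ p)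
    (hb : ∀ t, ‖f' t‖ ≤ B * |t| ^ p) (ω : ℝ) :
    ‖f ω‖ ≤ B / (p + 1) * |ω| ^ (p + 1) := by
  rcases le_total 0 ω with hω | hω
  · exact norm_le_of_deriv_rpow_aux hd hc h0 hB hp hb hω
  · have hd' : ∀ t : ℝ, HasDerivAt (fun s => f (-s)) (-f' (-t)) t := by
      intro t
      have := (hd (-t)).scomp t (hasDerivAt_neg t)
      simpa [Function.comp_def] using this
    have := norm_le_of_deriv_rpow_aux (f := fun s => f (-s)) (f' := fun t => -f' (-t))
      hd' ((hc.comp continuous_neg).neg) (by simpa using h0) hB hp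
      (fun t => by simpa using hb (-t)) (ω := -ω) (by linarith)
    simpa using this

/-- Regularity of the Fourier transform of an `m`th order kernel: for every
`α ∈ (0,1)`, `K̂ ∈ C^{m−1,α}(ℝ)` and
`|K̂(ω) − 1| ≤ (|K̂^{(m−1)}|_{C^{0,α}}/(m−1)!)|ω|^{m−1+α}` for all `ω`. -/
theorem stmt_5 (m : ℕ) (hm : 1 ≤ m) (CK : ℝ) (K : ℝ → ℝ)
    (hK : IsKernelOfOrder m CK K) (α : ℝ) (hα0 : 0 < α) (hα1 : α < 1) :
    ContDiff ℝ (m - 1 : ℕ) (fourierK K) ∧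
    (∃ C : ℝ, 0 ≤ C ∧ ∀ x y : ℝ,
      ‖iteratedDeriv (m - 1) (fourierK K) x - iteratedDeriv (m - 1) (fourierK K) y‖
        ≤ C * |x - y| ^ α) ∧
    ∀ ω : ℝ, ‖fourierK K ω - 1‖ ≤
      holderSemiC α (iteratedDeriv (m - 1) (fourierK K)) / (Nat.factorial (m - 1))
        * |ω| ^ ((m : ℝ) - 1 + α) := by
  have hπ : (0:ℝ) < π := Real.pi_pos
  have hm1R : (1:ℝ) ≤ (m:ℝ) := by exact_mod_cast hm
  have hcast : (((m - 1 : ℕ)) : ℝ) = (m:ℝ) - 1 := by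
    rw [Nat.cast_sub hm, Nat.cast_one]
  set f : ℝ → ℂ := fun x => (K x : ℂ) with hf
  have hfeq : fourierK K = FourierTransform.fourier f := fourierK_eq K
  -- integrability of moments
  have hnorm : ∀ n : ℕ, (n : ℕ∞) ≤ ((m - 1 : ℕ) : ℕ∞) →
      Integrable fun x : ℝ => ‖x‖ ^ n * ‖f x‖ := by
    intro n hn
    have hn2 : n < m := by
      have : n ≤ m - 1 := by exact_mod_cast hn
      omega
    have hn' : (n:ℝ) < m := by exact_mod_cast hn2
    refine (kernel_integrable hK (p := n) (by positivity) hn').congr (ae_of_all _ fun x => ?_)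
    simp [hf, Real.rpow_natCast, Real.norm_eq_abs, Complex.norm_real]
  have hsmul : ∀ n : ℕ, (n : ℕ∞) ≤ ((m - 1 : ℕ) : ℕ∞) →
      Integrable fun x : ℝ => x ^ n • f x := by
    intro n hn
    refine (hnorm n hn).mono' ?_ (ae_of_all _ fun x => ?_)
    · exact (continuous_pow n).aestronglyMeasurable.smul
        (Complex.continuous_ofReal.comp_aestronglyMeasurable hK.integrable.aestronglyMeasurable)
    · rw [norm_smul]
      simp [hf]
  have hCD : ContDiff ℝ (m - 1 : ℕ) (fourierK K) := by
    rw [hfeq]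
    exact_mod_cast Real.contDiff_fourier hnorm
  have hder : ∀ n : ℕ, (n : ℕ∞) ≤ ((m - 1 : ℕ) : ℕ∞) →
      iteratedDeriv n (FourierTransform.fourier f)
        = FourierTransform.fourier fun x : ℝ => (-2 * π * Complex.I * x) ^ n • f x :=
    fun n hn => Real.iteratedDeriv_fourier hsmul hn
  have hval : ∀ g : ℝ → ℂ, FourierTransform.fourier g 0 = ∫ x, g x := by
    intro g
    rw [Real.fourier_real_eq_integral_exp_smul]
    simp
  have hval0 : ∀ n : ℕ, 0 < n → n ≤ m - 1 → iteratedDeriv n (fourierK K) 0 = 0 := by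
    intro n hn0 hn1
    rw [hfeq, hder n (by exact_mod_cast hn1), hval]
    have heq : ∀ x : ℝ, (-2 * π * Complex.I * x) ^ n • f x
        = (-2 * π * Complex.I) ^ n * (((x ^ n * K x : ℝ)) : ℂ) := by
      intro x
      rw [smul_eq_mul]
      push_cast
      ring
    simp_rw [heq]
    rw [integral_const_mul]
    have hcoe : (∫ x : ℝ, ((x ^ n * K x : ℝ) : ℂ)) = ((∫ x : ℝ, x ^ n * K x : ℝ) : ℂ) :=
      integral_ofReal (𝕜 := ℂ)
    rw [hcoe]
    have : (∫ x : ℝ, x ^ n * K x) = 0 := by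
      simp_rw [mul_comm]
      exact hK.moment_zero n hn0 (by omega)
    rw [this]
    simp
  have hval00 : fourierK K 0 = 1 := by
    rw [hfeq, hval]
    have hcoe : (∫ x : ℝ, ((K x : ℝ) : ℂ)) = ((∫ x : ℝ, K x : ℝ) : ℂ) :=
      integral_ofReal (𝕜 := ℂ)
    rw [show (∫ x : ℝ, f x) = ∫ x : ℝ, ((K x : ℝ) : ℂ) from rfl, hcoe, hK.integral_one]
    simp
  -- the Hölder estimate for the top derivative
  set h : ℝ → ℂ := iteratedDeriv (m - 1) (fourierK K) with hh
  set g : ℝ → ℂ := fun x => (-2 * π * Complex.I * x) ^ (m - 1) • f x with hg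
  have hgeq : h = FourierTransform.fourier g := by rw [hh, hfeq, hder (m - 1) le_rfl]
  have hgint : Integrable g := by
    have hrw : g = fun x : ℝ => ((-2 * π * Complex.I) ^ (m - 1) : ℂ) * (x ^ (m - 1) • f x) := by
      funext x
      rw [hg]
      simp only [smul_eq_mul, Complex.real_smul]
      push_cast
      ring
    rw [hrw]
    exact (hsmul (m - 1) le_rfl).const_mul _
  have hnormg : ∀ v : ℝ, ‖g v‖ = (2 * π) ^ (m - 1) * (|v| ^ ((m:ℝ) - 1) * |K v|) := by
    intro v
    rw [hg, norm_smul, norm_pow]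
    have : ‖(-2 * ↑π * Complex.I * ↑v : ℂ)‖ = 2 * π * |v| := by
      simp [abs_of_pos hπ]
    rw [this, mul_pow, mul_pow]
    rw [show ‖f v‖ = |K v| from by simp [hf], ← Real.rpow_natCast |v| (m-1), hcast]
    ring
  have hq0 : (0:ℝ) < (m:ℝ) - 1 + α := by linarith
  have hCint : Integrable (fun v : ℝ => |v| ^ ((m:ℝ) - 1 + α) * |K v|) :=
    kernel_integrable hK (by linarith) (by linarith)
  set Cint : ℝ := ∫ v, |v| ^ ((m:ℝ) - 1 + α) * |K v| with hCintdef
  have hCint0 : 0 ≤ Cint := integral_nonneg fun v => by positivity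
  set C : ℝ := 2 ^ (1 - α) * (4 * π) ^ α * (2 * π) ^ (m - 1) * Cint with hCdef
  have hC0 : 0 ≤ C := by positivity
  have hexpint : ∀ z : ℝ,
      Integrable fun v : ℝ => Complex.exp (↑(-2 * π * v * z) * Complex.I) • g v := by
    intro z
    refine hgint.norm.mono' ?_ (ae_of_all _ fun v => ?_)
    · exact ((Complex.continuous_exp.comp
        ((Complex.continuous_ofReal.comp (by fun_prop)).mul continuous_const))).aestronglyMeasurable.smul
        hgint.aestronglyMeasurable
    · rw [norm_smul, Complex.norm_exp_ofReal_mul_I, one_mul]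
  have hC : ∀ x y : ℝ, ‖h x - h y‖ ≤ C * |x - y| ^ α := by
    intro x y
    rw [hgeq, Real.fourier_real_eq_integral_exp_smul,
      Real.fourier_real_eq_integral_exp_smul, ← integral_sub (hexpint x) (hexpint y)]
    simp_rw [← sub_smul]
    have hbd : ∀ v : ℝ, ‖(Complex.exp (↑(-2 * π * v * x) * Complex.I)
        - Complex.exp (↑(-2 * π * v * y) * Complex.I)) • g v‖
        ≤ (2 ^ (1 - α) * (4 * π) ^ α * (2 * π) ^ (m - 1) * |x - y| ^ α)
            * (|v| ^ ((m:ℝ) - 1 + α) * |K v|) := by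
      intro v
      rw [norm_smul]
      have h1 := exp_sub_exp_bound hα0 hα1 (-2 * π * v * x) (-2 * π * v * y)
      have habs : 2 * |(-2 * π * v * x) - (-2 * π * v * y)| = 4 * π * (|v| * |x - y|) := by
        rw [show (-2 * π * v * x) - (-2 * π * v * y) = (2 * π) * (v * (y - x)) from by ring,
          abs_mul (2 * π) (v * (y - x)), abs_mul v (y - x),
          abs_of_pos (by positivity : (0:ℝ) < 2 * π), abs_sub_comm y x]
        ring
      rw [habs] at h1
      have h1' : ‖Complex.exp (↑(-2 * π * v * x) * Complex.I)
          - Complex.exp (↑(-2 * π * v * y) * Complex.I)‖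
          ≤ 2 ^ (1 - α) * ((4 * π) ^ α * (|v| ^ α * |x - y| ^ α)) := by
        refine h1.trans (le_of_eq ?_)
        rw [Real.mul_rpow (by positivity) (by positivity),
          Real.mul_rpow (abs_nonneg v) (abs_nonneg _)]
      calc ‖Complex.exp (↑(-2 * π * v * x) * Complex.I)
            - Complex.exp (↑(-2 * π * v * y) * Complex.I)‖ * ‖g v‖
          ≤ (2 ^ (1 - α) * ((4 * π) ^ α * (|v| ^ α * |x - y| ^ α)))
              * ((2 * π) ^ (m - 1) * (|v| ^ ((m:ℝ) - 1) * |K v|)) := by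
            rw [hnormg v]
            exact mul_le_mul_of_nonneg_right h1' (by positivity)
        _ = (2 ^ (1 - α) * (4 * π) ^ α * (2 * π) ^ (m - 1) * |x - y| ^ α)
              * ((|v| ^ α * |v| ^ ((m:ℝ) - 1)) * |K v|) := by ring
        _ = (2 ^ (1 - α) * (4 * π) ^ α * (2 * π) ^ (m - 1) * |x - y| ^ α)
              * (|v| ^ ((m:ℝ) - 1 + α) * |K v|) := by
            rw [← Real.rpow_add' (abs_nonneg v) (by rw [show α + ((m:ℝ) - 1) = (m:ℝ) - 1 + α from by ring]; exact hq0.ne'),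
              show α + ((m:ℝ) - 1) = (m:ℝ) - 1 + α from by ring]
    calc ‖∫ v, (Complex.exp (↑(-2 * π * v * x) * Complex.I)
          - Complex.exp (↑(-2 * π * v * y) * Complex.I)) • g v‖
        ≤ ∫ v, (2 ^ (1 - α) * (4 * π) ^ α * (2 * π) ^ (m - 1) * |x - y| ^ α)
            * (|v| ^ ((m:ℝ) - 1 + α) * |K v|) :=
          norm_integral_le_of_norm_le (hCint.const_mul _) (ae_of_all _ hbd)
      _ = C * |x - y| ^ α := by
          rw [integral_const_mul, ← hCintdef, hCdef]
          ring
  -- properties of the seminorm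
  set S : Set ℝ := {C' : ℝ | 0 ≤ C' ∧ ∀ x y : ℝ, ‖h x - h y‖ ≤ C' * |x - y| ^ α} with hS
  have hH_eq : holderSemiC α h = sInf S := rfl
  have hSne : S.Nonempty := ⟨C, hC0, hC⟩
  set H : ℝ := holderSemiC α h with hHdef
  have hH0 : 0 ≤ H := by
    rw [hH_eq]
    exact le_csInf hSne fun c hc => hc.1
  have hHle : ∀ x y : ℝ, ‖h x - h y‖ ≤ H * |x - y| ^ α := by
    intro x y
    rcases eq_or_ne x y with rfl | hxy
    · simp [Real.zero_rpow hα0.ne']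
    · have hpos : 0 < |x - y| ^ α := Real.rpow_pos_of_pos (abs_pos.2 (sub_ne_zero.2 hxy)) α
      have hdiv : ‖h x - h y‖ / |x - y| ^ α ≤ H := by
        rw [hH_eq]
        exact le_csInf hSne fun c hc => (div_le_iff₀ hpos).2 (hc.2 x y)
      calc ‖h x - h y‖ = ‖h x - h y‖ / |x - y| ^ α * |x - y| ^ α := by
            field_simp
        _ ≤ H * |x - y| ^ α := mul_le_mul_of_nonneg_right hdiv hpos.le
  -- differentiability bookkeeping
  have hdiffk : ∀ k : ℕ, k < m - 1 → ∀ t : ℝ,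
      HasDerivAt (iteratedDeriv k (fourierK K)) (iteratedDeriv (k + 1) (fourierK K) t) t := by
    intro k hk t
    rw [iteratedDeriv_succ]
    exact ((hCD.differentiable_iteratedDeriv k (by exact_mod_cast hk)) t).hasDerivAt
  have hcontk : ∀ k : ℕ, k ≤ m - 1 → Continuous (iteratedDeriv k (fourierK K)) :=
    fun k hk => hCD.continuous_iteratedDeriv k (by exact_mod_cast hk)
  -- Taylor-type induction
  have main : ∀ n : ℕ, n ≤ m - 1 → ∀ ω : ℝ,
      ‖iteratedDeriv (m - 1 - n) (fourierK K) ω - iteratedDeriv (m - 1 - n) (fourierK K) 0‖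
        ≤ H / (Nat.factorial n) * |ω| ^ ((n:ℝ) + α) := by
    intro n
    induction n with
    | zero =>
      intro _ ω
      have := hHle ω 0
      simpa [Nat.sub_zero, hh] using this
    | succ n ih =>
      intro hn ω
      have hn' : n ≤ m - 1 := Nat.le_of_succ_le hn
      have hk : m - 1 - (n + 1) < m - 1 := by omega
      have hkk : m - 1 - (n + 1) + 1 = m - 1 - n := by omega
      have hF0 : (fun t => iteratedDeriv (m - 1 - (n + 1)) (fourierK K) t
          - iteratedDeriv (m - 1 - (n + 1)) (fourierK K) 0) 0 = 0 := sub_self _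
      have hFd : ∀ t : ℝ, HasDerivAt (fun t => iteratedDeriv (m - 1 - (n + 1)) (fourierK K) t
          - iteratedDeriv (m - 1 - (n + 1)) (fourierK K) 0)
          (iteratedDeriv (m - 1 - n) (fourierK K) t) t := by
        intro t
        have := (hdiffk _ hk t).sub_const (iteratedDeriv (m - 1 - (n + 1)) (fourierK K) 0)
        rwa [hkk] at this
      have hzero : iteratedDeriv (m - 1 - n) (fourierK K) 0 = 0 :=
        hval0 _ (by omega) (by omega)
      have hbound : ∀ t : ℝ, ‖iteratedDeriv (m - 1 - n) (fourierK K) t‖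
          ≤ H / (Nat.factorial n) * |t| ^ ((n:ℝ) + α) := by
        intro t
        have := ih hn' t
        rwa [hzero, sub_zero] at this
      have hstep := norm_le_of_deriv_rpow hFd (hcontk _ (by omega))
        hF0 (by positivity) (by positivity) hbound ω
      refine hstep.trans ?_
      have hfacpos : (0:ℝ) < (Nat.factorial (n + 1) : ℝ) := by
        exact_mod_cast Nat.factorial_pos (n + 1)
      have hfac : H / (Nat.factorial n) / ((n:ℝ) + α + 1) ≤ H / (Nat.factorial (n + 1)) := by
        rw [div_div]
        apply div_le_div_of_nonneg_left hH0 hfacpos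
        · rw [Nat.factorial_succ]
          push_cast
          have hnf : (0:ℝ) < (Nat.factorial n : ℝ) := by exact_mod_cast Nat.factorial_pos n
          nlinarith
      have hexp : (n:ℝ) + α + 1 = ((n + 1 : ℕ):ℝ) + α := by push_cast; ring
      calc H / (Nat.factorial n) / ((n:ℝ) + α + 1) * |ω| ^ ((n:ℝ) + α + 1)
          ≤ H / (Nat.factorial (n + 1)) * |ω| ^ ((n:ℝ) + α + 1) :=
            mul_le_mul_of_nonneg_right hfac (Real.rpow_nonneg (abs_nonneg ω) _)
        _ = H / (Nat.factorial (n + 1)) * |ω| ^ (((n + 1 : ℕ):ℝ) + α) := by rw [hexp]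
  refine ⟨hCD, ⟨C, hC0, hC⟩, ?_⟩
  intro ω
  have hfin := main (m - 1) le_rfl ω
  rw [Nat.sub_self, iteratedDeriv_zero, hval00, hcast] at hfin
  exact hfin
end

section
/- Let m ≥ 1 and let K be an mth order kernel with constant C_K. Let μ be a Borel measure on ℝ with μ(ℝ) ≤ 1, and let x ∈ ℝ be a point with d := dist(x, supp μ) > 0. Then for every ε > 0, |[K_ε*μ](x)| ≤ C_K ε^m/(ε + d)^{m+1}. -/
open MeasureTheory Real Set

/-- The smoothed measure `[K_ε*μ](x) = ∫ ε⁻¹ K((x−y)/ε) dμ(y)`. -/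
noncomputable def kernSmooth (K : ℝ → ℝ) (ε : ℝ) (μ : Measure ℝ) (x : ℝ) : ℝ :=
  ∫ y, ε⁻¹ * K ((x - y) / ε) ∂μ

/-- The topological support of a Borel measure on `ℝ`: the set of points all of
whose open neighbourhoods have positive measure. -/
def measSupport (μ : Measure ℝ) : Set ℝ :=
  {y : ℝ | ∀ U : Set ℝ, IsOpen U → y ∈ U → 0 < μ U}

/-- Off-support decay of the smoothed measure: if `K` is an `m`th order kernel,
`μ` is a Borel measure on `ℝ` with `μ(ℝ) ≤ 1`, and
`d = dist(x, supp μ) > 0`, then `|[K_ε*μ](x)| ≤ C_K ε^m/(ε+d)^{m+1}` for all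
`ε > 0`. -/
theorem stmt_11 (m : ℕ) (hm : 1 ≤ m) (CK : ℝ) (K : ℝ → ℝ)
    (hK : IsKernelOfOrder m CK K) (μ : Measure ℝ) (hμ : μ Set.univ ≤ 1)
    (x : ℝ) (hd : 0 < Metric.infDist x (measSupport μ)) :
    ∀ ε : ℝ, 0 < ε →
      |kernSmooth K ε μ x| ≤
        CK * ε ^ m / (ε + Metric.infDist x (measSupport μ)) ^ (m + 1) := by
  intro ε hε
  haveI : IsFiniteMeasure μ := ⟨lt_of_le_of_lt hμ ENNReal.one_lt_top⟩
  set d := Metric.infDist x (measSupport μ) with hdd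
  -- a.e. point is in the support
  have hae : ∀ᵐ y ∂μ, y ∈ measSupport μ := by
    have h := Measure.everywherePosSubset_ae_eq_of_measure_ne_top (μ := μ)
      MeasurableSet.univ (measure_ne_top μ Set.univ)
    have h' : ∀ᵐ y ∂μ, y ∈ μ.everywherePosSubset Set.univ := by
      filter_upwards [h.mem_iff] with y hy
      exact hy.mpr (mem_univ y)
    filter_upwards [h'] with y hy U hU hyU
    exact hy.2 U (by simpa [nhdsWithin_univ] using hU.mem_nhds hyU)
  set C := CK * ε ^ m / (ε + d) ^ (m + 1) with hC
  have hεd : 0 < ε + d := by linarith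
  have hCK := hK.CK_pos
  have hCnonneg : 0 ≤ C := by positivity
  -- pointwise bound
  have hbound : ∀ᵐ y ∂μ, ‖ε⁻¹ * K ((x - y) / ε)‖ ≤ C := by
    filter_upwards [hae] with y hy
    have hdy : d ≤ |x - y| := by
      have := Metric.infDist_le_dist_of_mem (x := x) hy
      simpa [Real.dist_eq] using this
    have h1 : |K ((x - y) / ε)| ≤ CK / (1 + |(x - y) / ε|) ^ (m + 1) := hK.decay _
    have h2 : (ε + d) / ε ≤ 1 + |(x - y) / ε| := by
      rw [abs_div, abs_of_pos hε, add_div, div_self hε.ne']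
      gcongr
    have h3 : ((ε + d) / ε) ^ (m + 1) ≤ (1 + |(x - y) / ε|) ^ (m + 1) :=
      pow_le_pow_left₀ (by positivity) h2 _
    have h4 : CK / (1 + |(x - y) / ε|) ^ (m + 1) ≤ CK / ((ε + d) / ε) ^ (m + 1) :=
      div_le_div_of_nonneg_left hK.CK_pos.le (by positivity) h3
    have h5 : ε⁻¹ * (CK / ((ε + d) / ε) ^ (m + 1)) = C := by
      rw [hC, div_pow, div_div_eq_mul_div, pow_succ]
      field_simp
    calc ‖ε⁻¹ * K ((x - y) / ε)‖ = ε⁻¹ * |K ((x - y) / ε)| := by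
          rw [norm_mul, Real.norm_eq_abs, Real.norm_eq_abs, abs_of_pos (by positivity)]
      _ ≤ ε⁻¹ * (CK / (1 + |(x - y) / ε|) ^ (m + 1)) := by
          apply mul_le_mul_of_nonneg_left h1 (by positivity)
      _ ≤ ε⁻¹ * (CK / ((ε + d) / ε) ^ (m + 1)) := by
          apply mul_le_mul_of_nonneg_left h4 (by positivity)
      _ = C := h5
  have hint : ‖∫ y, ε⁻¹ * K ((x - y) / ε) ∂μ‖ ≤ C * (μ Set.univ).toReal :=
    norm_integral_le_of_norm_le_const hbound
  have hμ1 : (μ Set.univ).toReal ≤ 1 := by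
    rw [← ENNReal.toReal_one]
    exact ENNReal.toReal_mono ENNReal.one_ne_top hμ
  calc |kernSmooth K ε μ x| = ‖∫ y, ε⁻¹ * K ((x - y) / ε) ∂μ‖ := by
        rw [kernSmooth, Real.norm_eq_abs]
    _ ≤ C * (μ Set.univ).toReal := hint
    _ ≤ C * 1 := mul_le_mul_of_nonneg_left hμ1 hCnonneg
    _ = C := mul_one C
end

section
/- Let μ be a finite Borel measure on ℝ and let x ∈ ℝ. Suppose there exists η > 0 such that the restriction of μ to (x−η, x+η) ∖ {x} is absolutely continuous with respect to Lebesgue measure with density bounded by some M < ∞ on that set. Then ∫_ℝ ε²/(ε² + (x−y)²) dμ(y) = μ({x}) + O(ε) as ε ↓ 0; more precisely, there exist C > 0 and ε₀ > 0 such that |∫_ℝ ε²/(ε² + (x−y)²) dμ(y) − μ({x})| ≤ C ε for all 0 < ε < ε₀. -/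
open MeasureTheory Real Set

theorem poisson_int (x ε : ℝ) (hε : 0 < ε) :
    ∫ y : ℝ, ε ^ 2 / (ε ^ 2 + (x - y) ^ 2) = π * ε := by
  have h1 : ∀ y : ℝ, ε ^ 2 / (ε ^ 2 + (x - y) ^ 2)
      = (1 + (ε⁻¹ * (x - y)) ^ 2)⁻¹ := by
    intro y
    rw [mul_pow, inv_pow]
    rw [eq_comm, inv_eq_iff_eq_inv, inv_div]
    field_simp
  simp_rw [h1]
  have h2 : (fun y : ℝ => (1 + (ε⁻¹ * (x - y)) ^ 2)⁻¹)
      = fun y : ℝ => (fun u : ℝ => (1 + (ε⁻¹ * u) ^ 2)⁻¹) (x - y) := rfl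
  rw [h2, integral_sub_left_eq_self (fun u : ℝ => (1 + (ε⁻¹ * u) ^ 2)⁻¹) volume x]
  rw [MeasureTheory.Measure.integral_comp_mul_left (fun u : ℝ => (1 + u ^ 2)⁻¹) ε⁻¹]
  rw [integral_univ_inv_one_add_sq, inv_inv, abs_of_pos hε, smul_eq_mul, mul_comm]

theorem poisson_integrable (x ε : ℝ) (hε : 0 < ε) :
    Integrable (fun y : ℝ => ε ^ 2 / (ε ^ 2 + (x - y) ^ 2)) volume := by
  have h1 : ∀ y : ℝ, ε ^ 2 / (ε ^ 2 + (x - y) ^ 2)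
      = (1 + (ε⁻¹ * (x - y)) ^ 2)⁻¹ := by
    intro y
    rw [mul_pow, inv_pow]
    rw [eq_comm, inv_eq_iff_eq_inv, inv_div]
    field_simp
  simp_rw [h1]
  exact (integrable_inv_one_add_sq.comp_mul_left' (inv_ne_zero hε.ne')).comp_sub_left x

/-- If `μ` is a finite Borel measure on `ℝ` whose restriction to
`(x−η, x+η) ∖ {x}` is absolutely continuous with density bounded by `M`, then
`∫ ε²/(ε²+(x−y)²) dμ(y) = μ({x}) + O(ε)` as `ε ↓ 0`. -/
theorem stmt_14 (μ : Measure ℝ) [IsFiniteMeasure μ] (x : ℝ)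
    (η M : ℝ) (hη : 0 < η)
    (hac : ∃ ρ : ℝ → ℝ,
      (∀ y ∈ Ioo (x - η) (x + η) \ {x}, 0 ≤ ρ y ∧ ρ y ≤ M) ∧
      μ.restrict (Ioo (x - η) (x + η) \ {x}) =
        (volume.restrict (Ioo (x - η) (x + η) \ {x})).withDensity
          (fun y => ENNReal.ofReal (ρ y))) :
    ∃ C > (0 : ℝ), ∃ ε₀ > (0 : ℝ), ∀ ε : ℝ, 0 < ε → ε < ε₀ →
      |(∫ y, ε ^ 2 / (ε ^ 2 + (x - y) ^ 2) ∂μ) - (μ {x}).toReal| ≤ C * ε := by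
  obtain ⟨ρ, hρ, hμρ⟩ := hac
  set S : Set ℝ := Ioo (x - η) (x + η) \ {x} with hSdef
  have hSm : MeasurableSet S := measurableSet_Ioo.diff (measurableSet_singleton x)
  have hM0 : 0 ≤ M := by
    have hmem : x + η / 2 ∈ S := by
      constructor
      · constructor <;> [linarith; linarith]
      · simp only [mem_singleton_iff]; intro h; linarith
    linarith [(hρ _ hmem).1, (hρ _ hmem).2]
  set T : ℝ := (μ univ).toReal with hTdef
  have hT0 : 0 ≤ T := ENNReal.toReal_nonneg
  refine ⟨M * π + T / η ^ 2 + 1, by positivity, 1, one_pos, ?_⟩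
  intro ε hε hε1
  set f : ℝ → ℝ := fun y => ε ^ 2 / (ε ^ 2 + (x - y) ^ 2) with hfdef
  have hfc : Continuous f := by
    apply Continuous.div continuous_const (by continuity)
    intro y; positivity
  have hf0 : ∀ y, 0 ≤ f y := fun y => by positivity
  have hf1 : ∀ y, f y ≤ 1 := fun y => by
    rw [div_le_one (by positivity)]; nlinarith [sq_nonneg (x - y)]
  have hint : Integrable f μ := by
    refine Integrable.mono' (integrable_const 1) hfc.aestronglyMeasurable ?_
    exact ae_of_all _ fun y => by
      rw [Real.norm_eq_abs, abs_of_nonneg (hf0 y)]; exact hf1 y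
  -- decomposition of the integral
  have hxmem : x ∈ Ioo (x - η) (x + η) := ⟨by linarith, by linarith⟩
  have hsplit1 : ∫ y, f y ∂μ
      = (∫ y in {x}, f y ∂μ) + ∫ y in ({x} : Set ℝ)ᶜ, f y ∂μ :=
    (integral_add_compl (measurableSet_singleton x) hint).symm
  have hsing : ∫ y in {x}, f y ∂μ = (μ {x}).toReal := by
    rw [integral_singleton]
    have : f x = 1 := by
      simp only [hfdef, sub_self]
      norm_num
      exact hε.ne'
    rw [this, smul_eq_mul, mul_one, measureReal_def]
  have hcompl : ({x} : Set ℝ)ᶜ = S ∪ (Ioo (x - η) (x + η))ᶜ := by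
    ext y
    simp only [mem_compl_iff, mem_singleton_iff, mem_union, mem_diff, hSdef]
    constructor
    · intro h
      by_cases hy : y ∈ Ioo (x - η) (x + η)
      · exact Or.inl ⟨hy, h⟩
      · exact Or.inr hy
    · rintro (⟨_, h⟩ | h)
      · exact h
      · intro he; exact h (he ▸ hxmem)
  have hdisj : Disjoint S (Ioo (x - η) (x + η))ᶜ :=
    disjoint_compl_right.mono_left diff_subset
  have hsplit2 : ∫ y in ({x} : Set ℝ)ᶜ, f y ∂μ
      = (∫ y in S, f y ∂μ) + ∫ y in (Ioo (x - η) (x + η))ᶜ, f y ∂μ := by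
    rw [hcompl]
    exact setIntegral_union hdisj measurableSet_Ioo.compl
      hint.integrableOn hint.integrableOn
  -- the measure comparison on S
  have hle : μ.restrict S ≤ (ENNReal.ofReal M) • volume := by
    rw [Measure.le_iff]
    intro A hA
    rw [hμρ, withDensity_apply _ hA]
    calc ∫⁻ y in A, ENNReal.ofReal (ρ y) ∂(volume.restrict S)
        ≤ ∫⁻ _ in A, ENNReal.ofReal M ∂(volume.restrict S) := by
          apply lintegral_mono_ae
          rw [Measure.restrict_restrict hA]
          filter_upwards [ae_restrict_mem (hA.inter hSm)] with y hy
          exact ENNReal.ofReal_le_ofReal (hρ y hy.2).2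
      _ = ENNReal.ofReal M * volume (A ∩ S) := by
          rw [Measure.restrict_restrict hA, lintegral_const,
            Measure.restrict_apply MeasurableSet.univ, univ_inter]
      _ ≤ ENNReal.ofReal M * volume A :=
          mul_le_mul_right (measure_mono inter_subset_left) _
      _ = ((ENNReal.ofReal M) • volume) A := by
          rw [Measure.smul_apply, smul_eq_mul]
  -- near bound
  have hvolint : Integrable f volume := poisson_integrable x ε hε
  have hnear : ∫ y in S, f y ∂μ ≤ M * (π * ε) := by
    have hnn : 0 ≤ᵐ[μ.restrict S] f := ae_of_all _ hf0
    rw [integral_eq_lintegral_of_nonneg_ae hnn hfc.aestronglyMeasurable.restrict]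
    have hlin : ∫⁻ y, ENNReal.ofReal (f y) ∂(μ.restrict S)
        ≤ ENNReal.ofReal M * ENNReal.ofReal (π * ε) := by
      calc ∫⁻ y, ENNReal.ofReal (f y) ∂(μ.restrict S)
          ≤ ∫⁻ y, ENNReal.ofReal (f y) ∂((ENNReal.ofReal M) • volume) :=
            lintegral_mono' hle le_rfl
        _ = ENNReal.ofReal M * ∫⁻ y, ENNReal.ofReal (f y) ∂volume := by
            rw [lintegral_smul_measure, smul_eq_mul]
        _ = ENNReal.ofReal M * ENNReal.ofReal (π * ε) := by
            rw [← ofReal_integral_eq_lintegral_ofReal hvolint (ae_of_all _ hf0),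
              poisson_int x ε hε]
    calc (∫⁻ y, ENNReal.ofReal (f y) ∂(μ.restrict S)).toReal
        ≤ (ENNReal.ofReal M * ENNReal.ofReal (π * ε)).toReal := by
          apply ENNReal.toReal_mono _ hlin
          exact ENNReal.mul_ne_top ENNReal.ofReal_ne_top ENNReal.ofReal_ne_top
      _ = M * (π * ε) := by
          rw [ENNReal.toReal_mul, ENNReal.toReal_ofReal hM0,
            ENNReal.toReal_ofReal (by positivity)]
  have hnear0 : 0 ≤ ∫ y in S, f y ∂μ := setIntegral_nonneg hSm fun y _ => hf0 y
  -- far bound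
  have hfar0 : 0 ≤ ∫ y in (Ioo (x - η) (x + η))ᶜ, f y ∂μ :=
    setIntegral_nonneg measurableSet_Ioo.compl fun y _ => hf0 y
  have hfar : ∫ y in (Ioo (x - η) (x + η))ᶜ, f y ∂μ ≤ ε ^ 2 / η ^ 2 * T := by
    have hb : ∀ y ∈ (Ioo (x - η) (x + η))ᶜ, ‖f y‖ ≤ ε ^ 2 / η ^ 2 := by
      intro y hy
      rw [Real.norm_eq_abs, abs_of_nonneg (hf0 y)]
      have h2 : η ^ 2 ≤ ε ^ 2 + (x - y) ^ 2 := by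
        simp only [mem_compl_iff, mem_Ioo, not_and_or, not_lt] at hy
        rcases hy with h | h <;> nlinarith
      exact div_le_div_of_nonneg_left (by positivity) (by positivity) h2
    calc ∫ y in (Ioo (x - η) (x + η))ᶜ, f y ∂μ
        ≤ ‖∫ y in (Ioo (x - η) (x + η))ᶜ, f y ∂μ‖ := le_norm_self _
      _ ≤ ε ^ 2 / η ^ 2 * (μ (Ioo (x - η) (x + η))ᶜ).toReal :=
          norm_setIntegral_le_of_norm_le_const (measure_lt_top μ _) hb
      _ ≤ ε ^ 2 / η ^ 2 * T := by
          apply mul_le_mul_of_nonneg_left _ (by positivity)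
          exact ENNReal.toReal_mono (measure_ne_top μ _) (measure_mono (subset_univ _))
  -- conclude
  rw [hsplit1, hsing, hsplit2]
  have hD0 : 0 ≤ (μ {x}).toReal + ((∫ y in S, f y ∂μ)
      + ∫ y in (Ioo (x - η) (x + η))ᶜ, f y ∂μ) - (μ {x}).toReal := by linarith
  rw [abs_of_nonneg hD0]
  have hfar2 : ε ^ 2 / η ^ 2 * T ≤ T / η ^ 2 * ε := by
    rw [div_mul_eq_mul_div, div_mul_eq_mul_div, div_le_div_iff₀ (by positivity) (by positivity)]
    nlinarith [mul_nonneg (mul_nonneg hT0 (sq_nonneg η)) (mul_nonneg hε.le (sub_nonneg.2 hε1.le))]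
  nlinarith [Real.pi_pos]
end

section
/- Let m ≥ 1, let K be an mth order kernel with constant C_K, and let μ be a Borel probability measure on ℝ. Let n ≥ 0 be an integer and α ∈ (0,1) with n + α < m, and let F : ℝ → ℂ be n-times continuously differentiable with ‖F‖_{C^{n,α}(ℝ)} < ∞ (in particular F and its derivatives up to order n are bounded and F^{(n)} is α-Hölder continuous on ℝ). Then |∫_ℝ F(y) dμ(y) − ∫_ℝ F(x)[K_ε*μ](x) dx| = O(ε^{n+α}) + O(ε^m log(1/ε)) as ε ↓ 0. -/
open MeasureTheory Real Set

noncomputable def taySum (F : ℝ → ℂ) (n : ℕ) (y t : ℝ) : ℂ :=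
  ∑ j ∈ Finset.range (n+1), ((t ^ j / j.factorial : ℝ)) • iteratedDeriv j F y
lemma taySum_zero (F : ℝ → ℂ) (n : ℕ) (y : ℝ) : taySum F n y 0 = F y := by
  unfold taySum
  rw [Finset.sum_eq_single 0]
  · simp
  · intro j _ hj
    rcases Nat.exists_eq_succ_of_ne_zero hj with ⟨i, rfl⟩
    simp
  · simp

lemma hasDerivAt_taySum (F : ℝ → ℂ) (n : ℕ) (y s : ℝ) :
    HasDerivAt (fun s => taySum F (n+1) y s) (taySum (deriv F) n y s) s := by
  have h : ∀ j ∈ Finset.range (n+2), HasDerivAt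
      (fun s : ℝ => ((s ^ j / j.factorial : ℝ)) • iteratedDeriv j F y)
      ((((j : ℝ) * s ^ (j-1) / j.factorial : ℝ)) • iteratedDeriv j F y) s :=
    fun j _ => ((hasDerivAt_pow j s).div_const _).smul_const _
  have hsum := HasDerivAt.fun_sum h
  refine hsum.congr_deriv ?_
  rw [Finset.sum_range_succ']
  unfold taySum
  have h0 : (((0:ℕ) : ℝ) * s ^ (0-1) / (Nat.factorial 0) : ℝ) • iteratedDeriv 0 F y = 0 := by
    simp
  rw [h0, add_zero]
  apply Finset.sum_congr rfl
  intro i _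
  rw [iteratedDeriv_succ']
  congr 1
  have : ((i+1).factorial : ℝ) = (i+1) * i.factorial := by
    rw [Nat.factorial_succ]; push_cast; ring
  rw [this]
  have hi : ((i:ℝ)+1) ≠ 0 := by positivity
  have hf : ((i.factorial :ℝ)) ≠ 0 := by positivity
  field_simp
  rw [Nat.add_sub_cancel]; push_cast; ring

lemma taylor_holder (α C : ℝ) (hα : 0 < α) (hC : 0 ≤ C) :
    ∀ (n : ℕ) (F : ℝ → ℂ), ContDiff ℝ n F →
    (∀ x z : ℝ, ‖iteratedDeriv n F x - iteratedDeriv n F z‖ ≤ C * |x - z| ^ α) →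
    ∀ y t : ℝ, ‖F (y + t) - taySum F n y t‖ ≤ C * |t| ^ ((n : ℝ) + α) := by
  intro n
  induction n with
  | zero =>
    intro F _ hH y t
    have : taySum F 0 y t = F y := by simp [taySum]
    rw [this]
    simpa using hH (y + t) y
  | succ n ih =>
    intro F hF hH y t
    rcases eq_or_ne t 0 with rfl | ht
    · rw [taySum_zero]
      simp only [add_zero, sub_self, norm_zero, abs_zero]
      rw [Real.zero_rpow (by positivity)]
      simp
    · have hF' : Differentiable ℝ F ∧ ContDiff ℝ (n : ℕ) (deriv F) := by
        rw [show ((n+1 : ℕ) : WithTop ℕ∞) = (n : WithTop ℕ∞) + 1 by push_cast; rfl,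
          contDiff_succ_iff_deriv] at hF
        exact ⟨hF.1, hF.2.2⟩
      have hH' : ∀ x z : ℝ, ‖iteratedDeriv n (deriv F) x - iteratedDeriv n (deriv F) z‖
          ≤ C * |x - z| ^ α := by
        intro x z
        rw [← iteratedDeriv_succ']
        exact hH x z
      have hIH := ih (deriv F) hF'.2 hH'
      set G : ℝ → ℂ := fun s => F (y + s) - taySum F (n+1) y s with hGdef
      have hG : ∀ s : ℝ, HasDerivAt G (deriv F (y + s) - taySum (deriv F) n y s) s := by
        intro s
        have h1 : HasDerivAt (fun s : ℝ => F (y + s)) ((1:ℝ) • deriv F (y + s)) s :=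
          HasDerivAt.scomp s (hF'.1 (y + s)).hasDerivAt ((hasDerivAt_id s).const_add y)
        rw [one_smul] at h1
        exact h1.sub (hasDerivAt_taySum F n y s)
      have hb : ∀ s ∈ uIcc (0:ℝ) t, ‖deriv F (y + s) - taySum (deriv F) n y s‖
          ≤ C * |t| ^ ((n:ℝ) + α) := by
        intro s hs
        have hst : |s| ≤ |t| := by
          rw [Set.mem_uIcc] at hs
          have h1 := neg_abs_le t
          have h2 := le_abs_self t
          have h3 := abs_nonneg t
          rcases hs with ⟨ha, hb2⟩ | ⟨ha, hb2⟩ <;>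
            (rw [abs_le]; constructor <;> linarith)
        calc ‖deriv F (y + s) - taySum (deriv F) n y s‖ ≤ C * |s| ^ ((n:ℝ) + α) := hIH y s
          _ ≤ C * |t| ^ ((n:ℝ) + α) :=
            mul_le_mul_of_nonneg_left (Real.rpow_le_rpow (abs_nonneg s) hst (by positivity)) hC
      have hmv := Convex.norm_image_sub_le_of_norm_hasDerivWithin_le
        (fun s hs => (hG s).hasDerivWithinAt) hb (convex_uIcc 0 t)
        Set.left_mem_uIcc Set.right_mem_uIcc
      have hG0 : G 0 = 0 := by simp [hGdef, taySum_zero]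
      rw [hG0, sub_zero, sub_zero] at hmv
      calc ‖F (y + t) - taySum F (n+1) y t‖ = ‖G t‖ := rfl
        _ ≤ C * |t| ^ ((n:ℝ) + α) * ‖t‖ := hmv
        _ = C * |t| ^ (((n+1 : ℕ):ℝ) + α) := by
            rw [Real.norm_eq_abs, mul_assoc, ← Real.rpow_add_one (abs_ne_zero.2 ht)]
            push_cast; ring_nf

lemma cov {E : Type*} [NormedAddCommGroup E] [NormedSpace ℝ E] (K : ℝ → ℝ) {ε : ℝ}
    (hε : 0 < ε) (φ : ℝ → E) (y : ℝ) :
    ∫ x : ℝ, (ε⁻¹ * K ((x - y)/ε)) • φ x = ∫ v : ℝ, K v • φ (y + ε*v) := by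
  rw [← integral_add_right_eq_self (fun x => (ε⁻¹ * K ((x - y)/ε)) • φ x) y]
  have h1 : (fun u : ℝ => (ε⁻¹ * K ((u + y - y)/ε)) • φ (u + y))
      = fun u => (fun v => (ε⁻¹ * K v) • φ (y + ε*v)) (u / ε) := by
    funext u
    simp only [add_sub_cancel_right]
    rw [mul_div_cancel₀ _ hε.ne', add_comm]
  rw [h1, Measure.integral_comp_div (fun v => (ε⁻¹ * K v) • φ (y + ε*v)) ε,
    abs_of_pos hε, ← integral_smul]
  congr 1
  funext v
  rw [smul_smul, ← mul_assoc, mul_inv_cancel₀ hε.ne', one_mul]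

lemma weight_integrable (m : ℕ) (CK : ℝ) (K : ℝ → ℝ) (hKi : Integrable K) (hCK : 0 ≤ CK)
    (hdecay : ∀ x : ℝ, |K x| ≤ CK / (1 + |x|) ^ (m + 1))
    {s : ℝ} (hs0 : 0 ≤ s) (hsm : s < m) :
    Integrable (fun v : ℝ => |K v| * |v| ^ s) := by
  have hmeas : AEStronglyMeasurable (fun v : ℝ => |K v| * |v| ^ s) volume := by
    exact (hKi.1.norm.mul ((continuous_abs.rpow_const
      (fun x => Or.inr hs0)).aestronglyMeasurable))
  refine Integrable.mono' ((integrable_one_add_norm (E := ℝ)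
    (r := (m:ℝ) + 1 - s) ?_).const_mul CK) hmeas (ae_of_all _ ?_)
  · simp only [Module.finrank_self, Nat.cast_one]
    linarith
  · intro v
    have h1 : (0:ℝ) < 1 + |v| := by positivity
    have h2 : |v| ^ s ≤ (1 + |v|) ^ s :=
      Real.rpow_le_rpow (abs_nonneg v) (by linarith) hs0
    have h3 : |K v| ≤ CK * (1 + |v|) ^ (-((m:ℝ) + 1)) := by
      have := hdecay v
      rw [div_eq_mul_inv, ← Real.rpow_natCast (1 + |v|) (m+1)] at this
      rw [Real.rpow_neg h1.le]
      convert this using 3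
      · rfl
      · push_cast; ring
    have h4 : ‖|K v| * |v| ^ s‖ = |K v| * |v| ^ s := by
      rw [Real.norm_eq_abs, abs_of_nonneg (by positivity)]
    rw [h4, Real.norm_eq_abs]
    calc |K v| * |v| ^ s ≤ (CK * (1 + |v|) ^ (-((m:ℝ) + 1))) * (1 + |v|) ^ s := by
          apply mul_le_mul h3 h2 (by positivity) (by positivity)
      _ = CK * (1 + |v|) ^ (-((m:ℝ) + 1 - s)) := by
          rw [mul_assoc, ← Real.rpow_add h1]
          ring_nf
      _ = CK * (1 + ‖v‖) ^ (-((m:ℝ) + 1 - s)) := by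
          rw [Real.norm_eq_abs]

lemma pointwise_est
    (K : ℝ → ℝ) (hKi : Integrable K) (hK1 : (∫ x, K x) = 1)
    (n : ℕ)
    (hmom_i : ∀ j : ℕ, 0 < j → j ≤ n → Integrable (fun x => K x * x ^ j))
    (hmom_0 : ∀ j : ℕ, 0 < j → j ≤ n → (∫ x, K x * x ^ j) = 0)
    (α CH : ℝ) (hCH : 0 ≤ CH)
    (F : ℝ → ℂ) (hFc : Continuous F) (M0 : ℝ) (hM0 : ∀ x, ‖F x‖ ≤ M0)
    (hTay : ∀ y t : ℝ, ‖F (y + t) - taySum F n y t‖ ≤ CH * |t| ^ ((n:ℝ)+α))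
    (IW : Integrable (fun v : ℝ => |K v| * |v| ^ ((n:ℝ)+α)))
    {ε : ℝ} (hε : 0 < ε) (y : ℝ) :
    ‖F y - ∫ v : ℝ, K v • F (y + ε*v)‖
      ≤ (CH * ∫ v : ℝ, |K v| * |v| ^ ((n:ℝ)+α)) * ε ^ ((n:ℝ)+α) := by
  set T : ℝ → ℂ := fun v => K v • taySum F n y (ε*v) with hTdef
  have hT_eq : T = fun v => ∑ j ∈ Finset.range (n+1),
      ((ε^j / j.factorial : ℝ)) • ((K v * v ^ j) • iteratedDeriv j F y) := by
    funext v
    simp only [hTdef, taySum, Finset.smul_sum]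
    apply Finset.sum_congr rfl
    intro j _
    rw [smul_smul, smul_smul]
    congr 1
    rw [mul_pow]
    ring
  have hKj : ∀ j ∈ Finset.range (n+1), Integrable (fun v : ℝ => K v * v ^ j) := by
    intro j hj
    rcases Nat.eq_zero_or_pos j with rfl | hjpos
    · simpa using hKi
    · exact hmom_i j hjpos (Nat.lt_succ_iff.mp (Finset.mem_range.mp hj))
  have hterm_i : ∀ j ∈ Finset.range (n+1), Integrable (fun v : ℝ =>
      ((ε^j / j.factorial : ℝ)) • ((K v * v ^ j) • iteratedDeriv j F y)) := by
    intro j hj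
    exact (((hKj j hj).smul_const _).smul (ε^j / j.factorial : ℝ))
  have hTi : Integrable T := by
    rw [hT_eq]; exact integrable_finset_sum _ hterm_i
  have hTint : ∫ v : ℝ, T v = F y := by
    rw [hT_eq, integral_finset_sum _ hterm_i]
    have : ∀ j ∈ Finset.range (n+1), (∫ v : ℝ,
        ((ε^j / j.factorial : ℝ)) • ((K v * v ^ j) • iteratedDeriv j F y))
        = ((ε^j / j.factorial : ℝ)) • ((∫ v : ℝ, K v * v ^ j) • iteratedDeriv j F y) := by
      intro j _
      rw [integral_smul, integral_smul_const]
    rw [Finset.sum_congr rfl this, Finset.sum_eq_single 0]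
    · simp [hK1, iteratedDeriv_zero]
    · intro j hjmem hj
      rcases Nat.exists_eq_succ_of_ne_zero hj with ⟨i, rfl⟩
      rw [hmom_0 (i+1) (Nat.succ_pos i) (Nat.lt_succ_iff.mp (Finset.mem_range.mp hjmem))]
      · simp
    · intro h; exact absurd (Finset.mem_range.mpr (Nat.succ_pos n)) h
  have hFKi : Integrable (fun v : ℝ => K v • F (y + ε*v)) := by
    refine Integrable.mono' (hKi.norm.mul_const M0)
      (hKi.1.smul ((hFc.comp
        (continuous_const.add (continuous_const.mul continuous_id))).aestronglyMeasurable))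
      (ae_of_all _ fun v => ?_)
    rw [norm_smul, Real.norm_eq_abs]
    exact mul_le_mul_of_nonneg_left (hM0 _) (abs_nonneg _)
  have key : F y - ∫ v : ℝ, K v • F (y + ε*v)
      = ∫ v : ℝ, K v • (taySum F n y (ε*v) - F (y + ε*v)) := by
    rw [← hTint, ← integral_sub hTi hFKi]
    congr 1
    funext v
    rw [smul_sub]
  rw [key]
  have hb : ∀ v : ℝ, ‖K v • (taySum F n y (ε*v) - F (y + ε*v))‖
      ≤ (CH * ε^((n:ℝ)+α)) * (|K v| * |v|^((n:ℝ)+α)) := by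
    intro v
    rw [norm_smul, Real.norm_eq_abs, norm_sub_rev]
    have h1 := hTay y (ε*v)
    have h2 : |ε*v| ^ ((n:ℝ)+α) = ε^((n:ℝ)+α) * |v|^((n:ℝ)+α) := by
      rw [abs_mul, abs_of_pos hε, Real.mul_rpow hε.le (abs_nonneg v)]
    calc |K v| * ‖F (y + ε*v) - taySum F n y (ε*v)‖
        ≤ |K v| * (CH * |ε*v|^((n:ℝ)+α)) := mul_le_mul_of_nonneg_left h1 (abs_nonneg _)
      _ = (CH * ε^((n:ℝ)+α)) * (|K v| * |v|^((n:ℝ)+α)) := by rw [h2]; ring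
  calc ‖∫ v : ℝ, K v • (taySum F n y (ε*v) - F (y + ε*v))‖
      ≤ ∫ v : ℝ, (CH * ε^((n:ℝ)+α)) * (|K v| * |v|^((n:ℝ)+α)) :=
        norm_integral_le_of_norm_le (IW.const_mul _) (ae_of_all _ hb)
    _ = (CH * ∫ v : ℝ, |K v| * |v| ^ ((n:ℝ)+α)) * ε ^ ((n:ℝ)+α) := by
        rw [MeasureTheory.integral_const_mul]
        ring

/-- Convergence of integrals of smooth functionals: if `K` is an `m`th order
kernel, `μ` a Borel probability measure, and `F ∈ C^{n,α}(ℝ)` with bounded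
derivatives, `n + α < m`, then
`|∫ F dμ − ∫ F(x)[K_ε*μ](x) dx| = O(ε^{n+α}) + O(ε^m log(1/ε))` as `ε ↓ 0`. -/
theorem stmt_15 (m : ℕ) (hm : 1 ≤ m) (CK : ℝ) (K : ℝ → ℝ)
    (hK : IsKernelOfOrder m CK K) (μ : Measure ℝ) [IsProbabilityMeasure μ]
    (n : ℕ) (α : ℝ) (hα0 : 0 < α) (hα1 : α < 1) (hna : (n : ℝ) + α < m)
    (F : ℝ → ℂ) (hF : ContDiff ℝ (n : ℕ) F)
    (hFbdd : ∀ j ≤ n, ∃ M : ℝ, ∀ x : ℝ, ‖iteratedDeriv j F x‖ ≤ M)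
    (hFhold : ∃ C : ℝ, 0 ≤ C ∧ ∀ x y : ℝ,
      ‖iteratedDeriv n F x - iteratedDeriv n F y‖ ≤ C * |x - y| ^ α) :
    ∃ C > (0 : ℝ), ∃ ε₀ ∈ Set.Ioo (0 : ℝ) 1, ∀ ε : ℝ, 0 < ε → ε < ε₀ →
      ‖(∫ y, F y ∂μ) - ∫ x : ℝ, F x * (kernSmooth K ε μ x : ℂ)‖ ≤
        C * (ε ^ ((n : ℝ) + α) + ε ^ m * Real.log (1 / ε)) := by
  obtain ⟨CH, hCH0, hCH⟩ := hFhold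
  obtain ⟨M0, hM0'⟩ := hFbdd 0 (Nat.zero_le n)
  have hM0 : ∀ x : ℝ, ‖F x‖ ≤ M0 := by
    intro x
    have := hM0' x
    rwa [iteratedDeriv_zero] at this
  have hFc : Continuous F := hF.continuous
  have hnm : n < m := by
    have : (n : ℝ) < m := by linarith
    exact_mod_cast this
  have hTay : ∀ y t : ℝ, ‖F (y + t) - taySum F n y t‖ ≤ CH * |t| ^ ((n:ℝ)+α) :=
    taylor_holder α CH hα0 hCH0 n F hF hCH
  have IW : Integrable (fun v : ℝ => |K v| * |v| ^ ((n:ℝ)+α)) :=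
    weight_integrable m CK K hK.integrable hK.CK_pos.le hK.decay (by positivity) hna
  set I : ℝ := ∫ v : ℝ, |K v| * |v| ^ ((n:ℝ)+α) with hIdef
  have hI0 : 0 ≤ I := integral_nonneg fun v => by positivity
  refine ⟨CH * I + 1, by positivity, 1/2, by norm_num, ?_⟩
  intro ε hε hε2
  have hε1 : ε < 1 := by linarith
  -- Fubini
  have qmp : Measure.QuasiMeasurePreserving (fun p : ℝ × ℝ => (p.2 - p.1)/ε)
      (μ.prod volume) volume := by
    apply MeasureTheory.QuasiMeasurePreserving.prod_of_right
      ((measurable_snd.sub measurable_fst).div_const ε)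
    refine ae_of_all _ fun y => ?_
    have h1 : MeasurePreserving (fun x : ℝ => x - y) volume volume :=
      measurePreserving_sub_right volume y
    have h2 : Measure.QuasiMeasurePreserving (fun x : ℝ => x / ε) volume volume := by
      refine ⟨measurable_id.div_const ε, ?_⟩
      have hdiv : (fun x : ℝ => x / ε) = fun x : ℝ => ε⁻¹ * x := by
        funext x; rw [div_eq_inv_mul]
      rw [hdiv, Real.map_volume_mul_left (inv_ne_zero hε.ne')]
      exact Measure.smul_absolutelyContinuous
    exact h2.comp h1.quasiMeasurePreserving
  have hmeas : AEStronglyMeasurable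
      (fun p : ℝ × ℝ => (ε⁻¹ * K ((p.2 - p.1)/ε)) • F p.2) (μ.prod volume) :=
    ((hK.integrable.1.comp_quasiMeasurePreserving qmp).const_mul ε⁻¹).smul
      ((hFc.comp continuous_snd).aestronglyMeasurable)
  have hky : ∀ y : ℝ, Integrable (fun x : ℝ => (ε⁻¹ * K ((x - y)/ε)) • F x) := by
    intro y
    have hk1 : Integrable (fun x : ℝ => K ((x - y)/ε)) :=
      (hK.integrable.comp_div hε.ne').comp_sub_right y
    refine Integrable.mono' ((hk1.norm.const_mul ε⁻¹).mul_const M0)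
      ((hk1.1.const_mul ε⁻¹).smul hFc.aestronglyMeasurable) (ae_of_all _ fun x => ?_)
    rw [norm_smul, Real.norm_eq_abs, abs_mul, abs_inv, abs_of_pos hε, Real.norm_eq_abs]
    exact mul_le_mul_of_nonneg_left (hM0 x) (by positivity)
  have hnormint : ∀ y : ℝ, (∫ x : ℝ, ‖(ε⁻¹ * K ((x - y)/ε)) • F x‖) ≤ M0 * ∫ x : ℝ, |K x| := by
    intro y
    have hcov := cov (fun u => |K u|) hε (fun x => ‖F x‖) y
    have heq : (fun x : ℝ => ‖(ε⁻¹ * K ((x - y)/ε)) • F x‖)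
        = fun x : ℝ => (ε⁻¹ * |K ((x - y)/ε)|) • ‖F x‖ := by
      funext x
      rw [norm_smul, Real.norm_eq_abs, abs_mul, abs_inv, abs_of_pos hε, smul_eq_mul]
    rw [heq, hcov]
    have hMnn : 0 ≤ M0 := le_trans (norm_nonneg _) (hM0 0)
    have hbd : ∀ v : ℝ, ‖|K v| • ‖F (y + ε*v)‖‖ ≤ |K v| * M0 := by
      intro v
      rw [smul_eq_mul, Real.norm_eq_abs, abs_mul, abs_abs, abs_of_nonneg (norm_nonneg _)]
      exact mul_le_mul_of_nonneg_left (hM0 _) (abs_nonneg _)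
    calc (∫ v : ℝ, |K v| • ‖F (y + ε*v)‖)
        ≤ ‖∫ v : ℝ, |K v| • ‖F (y + ε*v)‖‖ := le_abs_self _
      _ ≤ ∫ v : ℝ, |K v| * M0 :=
          norm_integral_le_of_norm_le (hK.integrable.norm.mul_const M0) (ae_of_all _ hbd)
      _ = M0 * ∫ x : ℝ, |K x| := by rw [integral_mul_const]; ring
  have hint : Integrable (fun p : ℝ × ℝ => (ε⁻¹ * K ((p.2 - p.1)/ε)) • F p.2)
      (μ.prod volume) := by
    rw [integrable_prod_iff hmeas]
    constructor
    · exact ae_of_all _ fun y => hky y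
    · refine Integrable.mono' (integrable_const (M0 * ∫ x : ℝ, |K x|))
        hmeas.norm.integral_prod_right' (ae_of_all _ fun y => ?_)
      rw [Real.norm_eq_abs, abs_of_nonneg (integral_nonneg fun x => norm_nonneg _)]
      exact hnormint y
  have hswap : ∫ y, (∫ x : ℝ, (ε⁻¹ * K ((x - y)/ε)) • F x) ∂μ
      = ∫ x : ℝ, (∫ y, (ε⁻¹ * K ((x - y)/ε)) • F x ∂μ) := integral_integral_swap hint
  have hrhs : ∫ x : ℝ, F x * ((kernSmooth K ε μ x : ℝ) : ℂ)
      = ∫ y, (∫ x : ℝ, (ε⁻¹ * K ((x - y)/ε)) • F x) ∂μ := by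
    rw [hswap]
    congr 1
    funext x
    rw [integral_smul_const, kernSmooth, Complex.real_smul, mul_comm]
  have hGi : Integrable (fun y => ∫ x : ℝ, (ε⁻¹ * K ((x - y)/ε)) • F x) μ :=
    hint.integral_prod_left
  have hFi : Integrable F μ :=
    Integrable.mono' (integrable_const M0) hFc.aestronglyMeasurable (ae_of_all _ hM0)
  have hdiff : (∫ y, F y ∂μ) - (∫ x : ℝ, F x * ((kernSmooth K ε μ x : ℝ) : ℂ))
      = ∫ y, (F y - ∫ x : ℝ, (ε⁻¹ * K ((x - y)/ε)) • F x) ∂μ := by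
    rw [hrhs, integral_sub hFi hGi]
  have hptw : ∀ y : ℝ, ‖F y - ∫ x : ℝ, (ε⁻¹ * K ((x - y)/ε)) • F x‖
      ≤ (CH * I) * ε ^ ((n:ℝ)+α) := by
    intro y
    rw [cov K hε F y]
    exact pointwise_est K hK.integrable hK.integral_one n
      (fun j hj hjn => hK.moment_integrable j hj (lt_of_le_of_lt hjn hnm))
      (fun j hj hjn => hK.moment_zero j hj (lt_of_le_of_lt hjn hnm))
      α CH hCH0 F hFc M0 hM0 hTay IW hε y
  have hmain : ‖(∫ y, F y ∂μ) - ∫ x : ℝ, F x * ((kernSmooth K ε μ x : ℝ) : ℂ)‖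
      ≤ (CH * I) * ε ^ ((n:ℝ)+α) := by
    rw [hdiff]
    calc ‖∫ y, (F y - ∫ x : ℝ, (ε⁻¹ * K ((x - y)/ε)) • F x) ∂μ‖
        ≤ ∫ _y, (CH * I) * ε ^ ((n:ℝ)+α) ∂μ :=
          norm_integral_le_of_norm_le (integrable_const _) (ae_of_all _ hptw)
      _ = (CH * I) * ε ^ ((n:ℝ)+α) := by simp
  have hlog : 0 ≤ ε ^ m * Real.log (1/ε) := by
    apply mul_nonneg (by positivity)
    apply Real.log_nonneg
    rw [le_div_iff₀ hε]
    linarith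
  have hrp : 0 ≤ ε ^ ((n:ℝ)+α) := Real.rpow_nonneg hε.le _
  calc ‖(∫ y, F y ∂μ) - ∫ x : ℝ, F x * ((kernSmooth K ε μ x : ℝ) : ℂ)‖
      ≤ (CH * I) * ε ^ ((n:ℝ)+α) := hmain
    _ ≤ (CH * I + 1) * ε ^ ((n:ℝ)+α) := by nlinarith
    _ ≤ (CH * I + 1) * (ε ^ ((n:ℝ)+α) + ε ^ m * Real.log (1/ε)) := by
        apply mul_le_mul_of_nonneg_left (le_add_of_nonneg_right hlog) (by positivity)
end

section
/- For every α ∈ [0,1) and every ε > 0, the function y ↦ |y|^α ε/(ε² + y²) is integrable on ℝ and (1/π) ∫_ℝ ε |y|^α/(ε² + y²) dy = sec(απ/2) · ε^α. -/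
open MeasureTheory Real Set

lemma beta_Ioo (u v : ℝ) (hu : 0 < u) (hv : 0 < v) :
    IntegrableOn (fun s : ℝ => s ^ (u - 1) * (1 - s) ^ (v - 1)) (Ioo 0 1) ∧
    (∫ s in Ioo (0:ℝ) 1, s ^ (u - 1) * (1 - s) ^ (v - 1)) =
      Real.Gamma u * Real.Gamma v / Real.Gamma (u + v) := by
  have hc : IntegrableOn (fun x : ℝ =>
      (x : ℂ) ^ ((u:ℂ) - 1) * (1 - (x : ℂ)) ^ ((v:ℂ) - 1)) (Ioo 0 1) := by
    have := (Complex.betaIntegral_convergent (u := u) (v := v) (by simpa) (by simpa)).1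
    exact this.mono_set Ioo_subset_Ioc_self
  have key : ∀ x ∈ Ioo (0:ℝ) 1,
      ((x : ℂ) ^ ((u:ℂ) - 1) * (1 - (x : ℂ)) ^ ((v:ℂ) - 1)) =
        ((x ^ (u - 1) * (1 - x) ^ (v - 1) : ℝ) : ℂ) := by
    intro x hx
    rw [Complex.ofReal_mul, Complex.ofReal_cpow hx.1.le, Complex.ofReal_cpow (by linarith [hx.2])]
    push_cast
    ring_nf
  constructor
  · refine IntegrableOn.congr_fun hc.norm (fun x hx => ?_) measurableSet_Ioo
    rw [key x hx, Complex.norm_real, Real.norm_eq_abs, abs_of_nonneg]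
    exact mul_nonneg (Real.rpow_nonneg hx.1.le _) (Real.rpow_nonneg (by linarith [hx.2]) _)
  · have h1 : ((∫ s in Ioo (0:ℝ) 1, s ^ (u - 1) * (1 - s) ^ (v - 1) : ℝ) : ℂ) =
        Complex.betaIntegral u v := by
      rw [Complex.betaIntegral, intervalIntegral.integral_of_le zero_le_one,
        integral_Ioc_eq_integral_Ioo, setIntegral_congr_fun measurableSet_Ioo key]
      exact (integral_ofReal (𝕜 := ℂ)).symm
    have h2 := Complex.Gamma_mul_Gamma_eq_betaIntegral
      (s := (u:ℂ)) (t := (v:ℂ)) (by simpa) (by simpa)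
    rw [← h1] at h2
    have h3 : ((Real.Gamma u * Real.Gamma v : ℝ) : ℂ) =
        ((Real.Gamma (u+v) : ℝ) : ℂ) * ((∫ s in Ioo (0:ℝ) 1,
          s ^ (u - 1) * (1 - s) ^ (v - 1) : ℝ) : ℂ) := by
      simp only [Complex.ofReal_mul, ← Complex.Gamma_ofReal, Complex.ofReal_add]
      exact h2
    have h4 : Real.Gamma u * Real.Gamma v = Real.Gamma (u+v) *
        ∫ s in Ioo (0:ℝ) 1, s ^ (u - 1) * (1 - s) ^ (v - 1) := by
      exact_mod_cast h3
    have hG : Real.Gamma (u+v) ≠ 0 := (Real.Gamma_pos_of_pos (by linarith)).ne'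
    field_simp [h4]
    rw [h4]; ring

lemma cayley_int (u : ℝ) (hu0 : 0 < u) (hu1 : u < 1) :
    IntegrableOn (fun t : ℝ => t ^ (u - 1) / (1 + t)) (Ioi 0) ∧
    (∫ t in Ioi (0:ℝ), t ^ (u - 1) / (1 + t)) = π / Real.sin (π * u) := by
  set φ : ℝ → ℝ := fun s => s / (1 - s) with hφ
  set φ' : ℝ → ℝ := fun s => ((1 - s) ^ 2)⁻¹ with hφ'
  have hder : ∀ x ∈ Ioo (0:ℝ) 1, HasDerivWithinAt φ (φ' x) (Ioo 0 1) x := by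
    intro x hx
    have h1x : (1:ℝ) - x ≠ 0 := by have := hx.2; intro h; linarith [sub_eq_zero.mp h]
    have : HasDerivAt φ ((1 * (1 - x) - x * (0 - 1)) / (1 - x) ^ 2) x :=
      (hasDerivAt_id x).div ((hasDerivAt_const x 1).sub (hasDerivAt_id x)) h1x
    have e : (1 * (1 - x) - x * (0 - 1)) / (1 - x) ^ 2 = φ' x := by
      simp only [hφ']
      field_simp
      ring
    exact (e ▸ this).hasDerivWithinAt
  have hinj : InjOn φ (Ioo (0:ℝ) 1) := by
    intro x hx y hy h
    have h1x : (0:ℝ) < 1 - x := by linarith [hx.2]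
    have h1y : (0:ℝ) < 1 - y := by linarith [hy.2]
    rw [hφ, div_eq_div_iff h1x.ne' h1y.ne'] at h
    nlinarith
  have himg : φ '' Ioo 0 1 = Ioi (0:ℝ) := by
    ext t; constructor
    · rintro ⟨s, hs, rfl⟩
      exact div_pos hs.1 (by linarith [hs.2])
    · intro ht
      have ht : (0:ℝ) < t := ht
      refine ⟨t / (1 + t), ⟨div_pos ht (by linarith), ?_⟩, ?_⟩
      · rw [div_lt_one (by linarith)]; linarith
      · have h1t : (1:ℝ) + t ≠ 0 := by positivity
        rw [hφ]; field_simp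
        ring
  set g : ℝ → ℝ := fun t => t ^ (u - 1) / (1 + t) with hg
  have hkey : ∀ x ∈ Ioo (0:ℝ) 1, |φ' x| • g (φ x) = x ^ (u - 1) * (1 - x) ^ ((1 - u) - 1) := by
    intro x hx
    have h1x : (0:ℝ) < 1 - x := by linarith [hx.2]
    have e1 : (1:ℝ) + x / (1 - x) = (1 - x)⁻¹ := by field_simp; ring
    rw [smul_eq_mul, hg, hφ, hφ']
    simp only [e1]
    rw [Real.div_rpow hx.1.le h1x.le, abs_of_pos (by positivity),
      Real.rpow_sub h1x u 1, Real.rpow_sub h1x (1 - u) 1, Real.rpow_one,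
      Real.rpow_sub h1x 1 u, Real.rpow_one]
    have hxu : (0:ℝ) < (1 - x) ^ u := Real.rpow_pos_of_pos h1x u
    field_simp
  have hbeta := beta_Ioo u (1 - u) hu0 (by linarith)
  constructor
  · rw [← himg, integrableOn_image_iff_integrableOn_abs_deriv_smul measurableSet_Ioo hder hinj g]
    exact (hbeta.1.congr_fun (fun x hx => (hkey x hx).symm) measurableSet_Ioo)
  · rw [← himg, integral_image_eq_integral_abs_deriv_smul measurableSet_Ioo hder hinj g,
      setIntegral_congr_fun measurableSet_Ioo hkey, hbeta.2]
    rw [show u + (1 - u) = 1 by ring, Real.Gamma_one, div_one,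
      Real.Gamma_mul_Gamma_one_sub u]

lemma halfline_int (α : ℝ) (hα0 : 0 ≤ α) (hα1 : α < 1) :
    IntegrableOn (fun x : ℝ => x ^ α / (1 + x ^ 2)) (Ioi 0) ∧
    (∫ x in Ioi (0:ℝ), x ^ α / (1 + x ^ 2)) = π / (2 * Real.cos (α * π / 2)) := by
  have hcos : 0 < Real.cos (α * π / 2) :=
    Real.cos_pos_of_mem_Ioo ⟨by nlinarith [pi_pos], by nlinarith [pi_pos]⟩
  set u : ℝ := (α + 1) / 2 with hu
  obtain ⟨hint, hval⟩ := cayley_int u (by rw [hu]; linarith) (by rw [hu]; linarith)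
  have hsin : Real.sin (π * u) = Real.cos (α * π / 2) := by
    rw [show π * u = α * π / 2 + π / 2 by rw [hu]; ring, Real.sin_add_pi_div_two]
  set g : ℝ → ℝ := fun t => t ^ (u - 1) / (1 + t) with hg
  have hpt : ∀ x ∈ Ioi (0:ℝ),
      x ^ ((2:ℝ) - 1) • g (x ^ (2:ℝ)) = x ^ α / (1 + x ^ 2) := by
    intro x hx
    have hx : (0:ℝ) < x := hx
    have h1 : x ^ (2:ℝ) = x ^ 2 := by
      rw [← Real.rpow_natCast x 2]; norm_num
    have h2 : (x ^ (2:ℝ)) ^ (u - 1) = x ^ (α - 1) := by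
      rw [← Real.rpow_mul hx.le, show (2:ℝ) * (u - 1) = α - 1 by rw [hu]; ring]
    have h3 : x ^ ((2:ℝ) - 1) = x := by norm_num
    simp only [smul_eq_mul, hg]
    rw [h2, h3, h1]
    rw [mul_div_assoc']
    congr 1
    rw [mul_comm, ← Real.rpow_add_one hx.ne' (α - 1)]
    norm_num
  constructor
  · have hiff := integrableOn_Ioi_comp_rpow_iff' (E := ℝ) g (p := 2) two_ne_zero
    exact ((hiff.mpr hint).congr_fun hpt measurableSet_Ioi)
  · have hch := integral_comp_rpow_Ioi_of_pos (g := g) (p := 2) two_pos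
    have e2 : (∫ x in Ioi (0:ℝ), (2 * x ^ ((2:ℝ) - 1)) • g (x ^ (2:ℝ)))
        = 2 * ∫ x in Ioi (0:ℝ), x ^ α / (1 + x ^ 2) := by
      rw [← integral_const_mul]
      refine setIntegral_congr_fun measurableSet_Ioi (fun x hx => ?_)
      rw [← hpt x hx]
      simp [mul_assoc]
    rw [e2, hval, hsin] at hch
    field_simp at hch ⊢
    linarith

/-- The `α`-th absolute moment of the Poisson kernel: for `α ∈ [0,1)` and
`ε > 0`, the function `y ↦ |y|^α ε/(ε²+y²)` is integrable on `ℝ` and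
`(1/π) ∫ ε|y|^α/(ε²+y²) dy = sec(απ/2) ε^α`. -/
theorem stmt_17 (α : ℝ) (hα0 : 0 ≤ α) (hα1 : α < 1) (ε : ℝ) (hε : 0 < ε) :
    Integrable (fun y : ℝ => |y| ^ α * (ε / (ε ^ 2 + y ^ 2))) ∧
    (1 / π) * (∫ y : ℝ, ε * |y| ^ α / (ε ^ 2 + y ^ 2)) =
      (1 / Real.cos (α * π / 2)) * ε ^ α := by
  have hcos : 0 < Real.cos (α * π / 2) :=
    Real.cos_pos_of_mem_Ioo ⟨by nlinarith [pi_pos], by nlinarith [pi_pos]⟩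
  obtain ⟨hint, hval⟩ := halfline_int α hα0 hα1
  set G : ℝ → ℝ := fun x => x ^ α * (ε / (ε ^ 2 + x ^ 2)) with hG
  have hGs : ∀ x ∈ Ioi (0:ℝ), G (ε * x) = ε ^ (α - 1) * (x ^ α / (1 + x ^ 2)) := by
    intro x hx
    have hx : (0:ℝ) < x := hx
    have hd : (0:ℝ) < 1 + x ^ 2 := by positivity
    simp only [hG]
    rw [Real.mul_rpow hε.le hx.le, Real.rpow_sub hε α 1, Real.rpow_one, mul_pow]
    field_simp
  have hGI : IntegrableOn G (Ioi 0) := by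
    have h1 : IntegrableOn (fun x => G (ε * x)) (Ioi 0) :=
      IntegrableOn.congr_fun (hint.const_mul (ε ^ (α - 1)))
        (fun x hx => (hGs x hx).symm) measurableSet_Ioi
    have := (integrableOn_Ioi_comp_mul_left_iff G 0 hε).mp h1
    simpa using this
  have int_Ioi : IntegrableOn (fun y : ℝ => G |y|) (Ioi 0) :=
    hGI.congr_fun (fun x hx => by rw [abs_of_pos hx]) measurableSet_Ioi
  have hGint : Integrable (fun y : ℝ => G |y|) := by
    have int_Iic : IntegrableOn (fun y : ℝ => G |y|) (Iic 0) := by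
      rw [← Measure.map_neg_eq_self (volume : Measure ℝ)]
      have m : MeasurableEmbedding fun x : ℝ => -x := (Homeomorph.neg ℝ).measurableEmbedding
      rw [m.integrableOn_map_iff]
      simp_rw [Function.comp_def, abs_neg, neg_preimage, neg_Iic, neg_zero]
      exact Iff.mpr integrableOn_Ici_iff_integrableOn_Ioi int_Ioi
    have := int_Iic.union int_Ioi
    rwa [Iic_union_Ioi, integrableOn_univ] at this
  constructor
  · refine hGint.congr ?_
    filter_upwards with y
    simp only [hG, sq_abs]
  · have e0 : (fun y : ℝ => ε * |y| ^ α / (ε ^ 2 + y ^ 2)) = fun y : ℝ => G |y| := by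
      funext y
      simp only [hG, sq_abs]
      ring
    have e1 : (∫ y : ℝ, ε * |y| ^ α / (ε ^ 2 + y ^ 2)) = 2 * ∫ x in Ioi (0:ℝ), G x := by
      rw [e0]
      exact integral_comp_abs (f := G)
    have e2 : (∫ x in Ioi (0:ℝ), G (ε * x)) = ε⁻¹ • ∫ x in Ioi (0:ℝ), G x := by
      simpa using integral_comp_mul_left_Ioi G 0 hε
    have e3 : (∫ x in Ioi (0:ℝ), G (ε * x)) = ε ^ (α - 1) * (π / (2 * Real.cos (α * π / 2))) := by
      rw [setIntegral_congr_fun measurableSet_Ioi hGs, integral_const_mul, hval]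
    have e4 : (∫ x in Ioi (0:ℝ), G x) = ε * (ε ^ (α - 1) * (π / (2 * Real.cos (α * π / 2)))) := by
      rw [← e3, e2, smul_eq_mul]
      field_simp
    have e5 : ε * ε ^ (α - 1) = ε ^ α := by
      rw [mul_comm, ← Real.rpow_add_one hε.ne']
      norm_num
    rw [e1, e4, ← mul_assoc ε, e5]
    field_simp [pi_ne_zero]
end

section
/- There is no mth order kernel of order m ≥ 3 that is non-negative almost everywhere: if m ≥ 3 and K ∈ L¹(ℝ) satisfies ∫_ℝ K(x) dx = 1, ∫_ℝ K(x)x^j dx = 0 for 0 < j < m (with x ↦ K(x)x^j integrable), and |K(x)| ≤ C_K/(1+|x|)^{m+1} for all x, then K(x) < 0 on a set of positive Lebesgue measure. -/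
open MeasureTheory Real Set

/-- No kernel of order `m ≥ 3` is non-negative almost everywhere: if `K ∈ L¹(ℝ)`
satisfies `∫ K = 1`, has vanishing moments `∫ K(x)x^j dx = 0` for `0 < j < m`
(with `x ↦ K(x)x^j` integrable), and `|K(x)| ≤ C_K/(1+|x|)^{m+1}`, then `K < 0`
on a set of positive Lebesgue measure. -/
theorem stmt_18 (m : ℕ) (hm : 3 ≤ m) (CK : ℝ) (K : ℝ → ℝ)
    (hint : Integrable K) (hone : (∫ x, K x) = 1)
    (hmom_int : ∀ j : ℕ, 0 < j → j < m → Integrable (fun x => K x * x ^ j))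
    (hmom : ∀ j : ℕ, 0 < j → j < m → (∫ x, K x * x ^ j) = 0)
    (hdecay : ∀ x : ℝ, |K x| ≤ CK / (1 + |x|) ^ (m + 1)) :
    0 < volume {x : ℝ | K x < 0} := by
  by_contra h
  push_neg at h
  have hzero : volume {x : ℝ | K x < 0} = 0 := le_antisymm (le_of_not_gt (by simpa using h)) zero_le
  have hKnn : ∀ᵐ x : ℝ, 0 ≤ K x := by
    rw [ae_iff]
    simpa [not_le] using hzero
  have h2 : (2 : ℕ) < m := by omega
  have hint2 := hmom_int 2 (by norm_num) h2
  have hmom2 := hmom 2 (by norm_num) h2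
  have hnn2 : ∀ᵐ x : ℝ, 0 ≤ K x * x ^ 2 :=
    hKnn.mono fun x hx => mul_nonneg hx (sq_nonneg x)
  have hae : (fun x => K x * x ^ 2) =ᵐ[volume] 0 := by
    rw [← MeasureTheory.integral_eq_zero_iff_of_nonneg_ae hnn2 hint2]
    exact hmom2
  have hne : ∀ᵐ x : ℝ, x ≠ 0 := by
    rw [ae_iff]
    simpa using (by simpa using Real.volume_singleton (a := (0:ℝ)))
  have hK0 : K =ᵐ[volume] 0 := by
    filter_upwards [hae, hne] with x hx hxne
    have : x ^ 2 ≠ 0 := pow_ne_zero _ hxne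
    have := mul_eq_zero.mp hx
    tauto
  have : (∫ x, K x) = 0 := by
    rw [integral_congr_ae hK0]
    simp
  rw [hone] at this
  norm_num at this
end
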